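/- arXiv:2106.07736 — 7 statements merged into one kernel-verified Lean document; each statement's English description precedes it below -/
import Mathlib

section
/- Let A ∈ ℝ^{p×r} (1 ≤ r ≤ p) have orthonormal columns a_1,…,a_r, i.e. AᵀA = I_r. Then for every q ∈ ℝ^p with ‖q‖₂ = 1 one has ‖Aᵀq‖₄⁴ ≤ 1, and ‖Aᵀq‖₄⁴ = 1 holds if and only if q = a_i or q = −a_i for some i ∈ {1,…,r}. Consequently, the maximizers of ‖Aᵀq‖₄⁴ over the unit sphere are exactly the signed columns of A. -/
open Matrix MeasureTheory ProbabilityTheory Real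
open scoped BigOperators ENNReal

noncomputable section

/-- squared Euclidean norm -/
def l2sq {m : ℕ} (v : Fin m → ℝ) : ℝ := ∑ i, v i ^ 2

/-- fourth power of the ℓ₄ norm -/
def l4p4 {m : ℕ} (v : Fin m → ℝ) : ℝ := ∑ i, v i ^ 4

/-- Euclidean norm -/
def l2norm {m : ℕ} (v : Fin m → ℝ) : ℝ := Real.sqrt (l2sq v)

/-- squared sup-norm -/
def linfSq {m : ℕ} (v : Fin m → ℝ) : ℝ := ⨆ i, (v i) ^ 2

/-- projection onto the orthogonal complement of q -/
def proj {p : ℕ} (q : Fin p → ℝ) : Matrix (Fin p) (Fin p) ℝ := 1 - Matrix.vecMulVec q q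

def zeta {p r : ℕ} (A : Matrix (Fin p) (Fin r) ℝ) (q : Fin p → ℝ) : Fin r → ℝ := Aᵀ *ᵥ q

/-- population objective -/
def fpop {p r : ℕ} (θ : ℝ) (A : Matrix (Fin p) (Fin r) ℝ) (q : Fin p → ℝ) : ℝ :=
  -(1/4) * ((1 - θ) * l4p4 (zeta A q) + θ * (l2sq (zeta A q)) ^ 2)

/-- Riemannian gradient of the population objective -/
def gradf {p r : ℕ} (θ : ℝ) (A : Matrix (Fin p) (Fin r) ℝ) (q : Fin p → ℝ) : Fin p → ℝ :=
  -((proj q) *ᵥ ((1 - θ) • (A *ᵥ fun j => (zeta A q j) ^ 3)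
      + (θ * l2sq (zeta A q)) • (A *ᵥ zeta A q)))

/-- Riemannian Hessian of the population objective -/
def hessf {p r : ℕ} (θ : ℝ) (A : Matrix (Fin p) (Fin r) ℝ) (q : Fin p → ℝ) :
    Matrix (Fin p) (Fin p) ℝ :=
  -((1 - θ) • (proj q *
      ((3 : ℝ) • (A * Matrix.diagonal (fun j => (zeta A q j) ^ 2) * Aᵀ)
        - l4p4 (zeta A q) • (1 : Matrix (Fin p) (Fin p) ℝ)) * proj q))
  - θ • (proj q *
      (l2sq (zeta A q) • (A * Aᵀ)
        + (2 : ℝ) • (A * Aᵀ * Matrix.vecMulVec q q * (A * Aᵀ))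
        - (l2sq (zeta A q)) ^ 2 • (1 : Matrix (Fin p) (Fin p) ℝ)) * proj q)

/-- quadratic form -/
def qform {p : ℕ} (M : Matrix (Fin p) (Fin p) ℝ) (v : Fin p → ℝ) : ℝ := v ⬝ᵥ (M *ᵥ v)

/-- α(q) -/
def alphaf {p r : ℕ} (θ : ℝ) (A : Matrix (Fin p) (Fin r) ℝ) (q : Fin p → ℝ) : ℝ :=
  l4p4 (zeta A q) + (θ / (1 - θ)) * ((l2sq (zeta A q)) ^ 2 - l2sq (zeta A q))

/-- columns of X -/
def colX {r n : ℕ} (X : Matrix (Fin r) (Fin n) ℝ) (k : Fin n) : Fin r → ℝ := fun i => X i k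

/-- finite-sample objective -/
def Ffun {p r n : ℕ} (θ σ : ℝ) (A : Matrix (Fin p) (Fin r) ℝ) (X : Matrix (Fin r) (Fin n) ℝ)
    (q : Fin p → ℝ) : ℝ :=
  -(1 / (12 * θ * σ ^ 4 * n)) * ∑ k : Fin n, (q ⬝ᵥ (A *ᵥ colX X k)) ^ 4

/-- Riemannian gradient of the finite-sample objective -/
def gradF {p r n : ℕ} (θ σ : ℝ) (A : Matrix (Fin p) (Fin r) ℝ) (X : Matrix (Fin r) (Fin n) ℝ)
    (q : Fin p → ℝ) : Fin p → ℝ :=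
  (-(1 / (3 * θ * σ ^ 4 * n))) •
    ((proj q) *ᵥ ∑ k : Fin n, ((q ⬝ᵥ (A *ᵥ colX X k)) ^ 3) • (A *ᵥ colX X k))

/-- Riemannian Hessian of the finite-sample objective -/
def hessF {p r n : ℕ} (θ σ : ℝ) (A : Matrix (Fin p) (Fin r) ℝ) (X : Matrix (Fin r) (Fin n) ℝ)
    (q : Fin p → ℝ) : Matrix (Fin p) (Fin p) ℝ :=
  (-(1 / (3 * θ * σ ^ 4 * n))) •
    ∑ k : Fin n, proj q *
      ((3 * (q ⬝ᵥ (A *ᵥ colX X k)) ^ 2) • Matrix.vecMulVec (A *ᵥ colX X k) (A *ᵥ colX X k)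
        - ((q ⬝ᵥ (A *ᵥ colX X k)) ^ 4) • (1 : Matrix (Fin p) (Fin p) ℝ)) * proj q

/-- spectral norm of a rectangular matrix -/
def opNorm {m n : ℕ} (M : Matrix (Fin m) (Fin n) ℝ) : ℝ :=
  ‖LinearMap.toContinuousLinearMap (Matrix.toEuclideanLin M)‖

/-- Bernoulli(θ) law on ℝ -/
def bernoulliReal (θ : ℝ) : Measure ℝ :=
  ENNReal.ofReal θ • Measure.dirac (1 : ℝ) + ENNReal.ofReal (1 - θ) • Measure.dirac (0 : ℝ)

/-- Bernoulli–Gaussian law BG(θ, σ²) on ℝ -/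
def bgLaw (θ σ2 : ℝ) : Measure ℝ :=
  ((bernoulliReal θ).prod (gaussianReal 0 σ2.toNNReal)).map fun p => p.1 * p.2

/-- law of a random vector in ℝ^r with i.i.d. BG(θ, σ²) entries -/
def bgVec (r : ℕ) (θ σ2 : ℝ) : Measure (Fin r → ℝ) :=
  Measure.pi fun _ : Fin r => bgLaw θ σ2

/-- law of a random r×n matrix with i.i.d. BG(θ, σ²) entries -/
def bgMatrix (r n : ℕ) (θ σ2 : ℝ) : Measure (Fin r → Fin n → ℝ) :=
  Measure.pi fun _ : Fin r => Measure.pi fun _ : Fin n => bgLaw θ σ2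


theorem stmt0 (p r : ℕ) (hr : 1 ≤ r) (hrp : r ≤ p)
    (A : Matrix (Fin p) (Fin r) ℝ) (hA : Aᵀ * A = 1) :
    ∀ q : Fin p → ℝ, l2sq q = 1 →
      l4p4 (zeta A q) ≤ 1 ∧
      (l4p4 (zeta A q) = 1 ↔
        ∃ i : Fin r, q = (fun k => A k i) ∨ q = (fun k => -A k i)) := by
  intro q hq
  have hAentry : ∀ i j, ∑ k, A k i * A k j = if i = j then (1:ℝ) else 0 := by
    intro i j
    have := congrFun (congrFun hA i) j
    simpa [Matrix.mul_apply, Matrix.transpose_apply, Matrix.one_apply] using this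
  set v : Fin r → ℝ := zeta A q with hv
  have hvj : ∀ j, v j = ∑ k, A k j * q k := by
    intro j
    simp [hv, zeta, Matrix.mulVec, dotProduct, Matrix.transpose_apply]
  set w : Fin p → ℝ := A *ᵥ v with hw
  have hwk : ∀ k, w k = ∑ j, A k j * v j := by
    intro k; simp [hw, Matrix.mulVec, dotProduct]
  have hq' : ∑ k, q k ^ 2 = 1 := hq
  have hqw : ∑ k, q k * w k = ∑ j, v j ^ 2 := by
    calc ∑ k, q k * w k = ∑ k, ∑ j, q k * (A k j * v j) := by
          simp only [hwk, Finset.mul_sum]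
      _ = ∑ j, ∑ k, q k * (A k j * v j) := Finset.sum_comm
      _ = ∑ j, v j ^ 2 := by
          refine Finset.sum_congr rfl fun j _ => ?_
          have : ∑ k, q k * (A k j * v j) = (∑ k, A k j * q k) * v j := by
            rw [Finset.sum_mul]; exact Finset.sum_congr rfl fun k _ => by ring
          rw [this, ← hvj j]; ring
  have hww : ∑ k, w k ^ 2 = ∑ j, v j ^ 2 := by
    have hexp : ∀ k, w k ^ 2 = ∑ j, ∑ j', (A k j * A k j') * (v j * v j') := by
      intro k
      rw [hwk, sq, Finset.sum_mul_sum]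
      exact Finset.sum_congr rfl fun j _ => Finset.sum_congr rfl fun j' _ => by ring
    calc ∑ k, w k ^ 2 = ∑ k, ∑ j, ∑ j', (A k j * A k j') * (v j * v j') :=
          Finset.sum_congr rfl fun k _ => hexp k
      _ = ∑ j, ∑ k, ∑ j', (A k j * A k j') * (v j * v j') := Finset.sum_comm
      _ = ∑ j, ∑ j', ∑ k, (A k j * A k j') * (v j * v j') :=
          Finset.sum_congr rfl fun j _ => Finset.sum_comm
      _ = ∑ j, ∑ j', (∑ k, A k j * A k j') * (v j * v j') := by
          refine Finset.sum_congr rfl fun j _ => Finset.sum_congr rfl fun j' _ => ?_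
          rw [Finset.sum_mul]
      _ = ∑ j, ∑ j', (if j = j' then (1:ℝ) else 0) * (v j * v j') := by
          simp only [hAentry]
      _ = ∑ j, v j ^ 2 := by
          refine Finset.sum_congr rfl fun j _ => ?_
          simp [ite_mul, Finset.sum_ite_eq, sq]
  have hdiff : ∑ k, (q k - w k) ^ 2 = 1 - ∑ j, v j ^ 2 := by
    have hxp : ∀ k, (q k - w k) ^ 2 = q k ^ 2 - 2 * (q k * w k) + w k ^ 2 :=
      fun k => by ring
    rw [Finset.sum_congr rfl fun k _ => hxp k, Finset.sum_add_distrib,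
      Finset.sum_sub_distrib, ← Finset.mul_sum, hqw, hww, hq']
    ring
  have hdnn : (0:ℝ) ≤ ∑ k, (q k - w k) ^ 2 :=
    Finset.sum_nonneg fun k _ => sq_nonneg _
  have hv1 : ∑ j, v j ^ 2 ≤ 1 := by linarith [hdiff ▸ hdnn]
  have hvnn : (0:ℝ) ≤ ∑ j, v j ^ 2 := Finset.sum_nonneg fun j _ => sq_nonneg _
  -- ∑ v⁴ ≤ (∑ v²)²
  have key : ∑ j, v j ^ 4 ≤ (∑ j, v j ^ 2) ^ 2 := by
    have h1 : ∀ j ∈ Finset.univ, v j ^ 4 ≤ v j ^ 2 * ∑ j', v j' ^ 2 := by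
      intro j _
      have := Finset.single_le_sum (f := fun j' => v j' ^ 2)
        (fun j' _ => sq_nonneg _) (Finset.mem_univ j)
      calc v j ^ 4 = v j ^ 2 * v j ^ 2 := by ring
        _ ≤ v j ^ 2 * ∑ j', v j' ^ 2 := mul_le_mul_of_nonneg_left this (sq_nonneg _)
    calc ∑ j, v j ^ 4 ≤ ∑ j, v j ^ 2 * ∑ j', v j' ^ 2 := Finset.sum_le_sum h1
      _ = (∑ j, v j ^ 2) ^ 2 := by rw [← Finset.sum_mul]; ring
  have hl4 : l4p4 v = ∑ j, v j ^ 4 := rfl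
  have hbound : l4p4 v ≤ 1 := by rw [hl4]; nlinarith
  refine ⟨hbound, ?_, ?_⟩
  · -- forward
    intro h1
    rw [hl4] at h1
    have hs1 : ∑ j, v j ^ 2 = 1 := by nlinarith
    have hqeqw : ∀ k, q k = w k := by
      have h0 : ∑ k, (q k - w k) ^ 2 = 0 := by rw [hdiff, hs1]; ring
      intro k
      have := (Finset.sum_eq_zero_iff_of_nonneg (fun k _ => sq_nonneg (q k - w k))).mp h0
        k (Finset.mem_univ k)
      have := sq_eq_zero_iff.mp this
      linarith
    -- cross terms vanish
    have hcross : ∀ j j', j ≠ j' → v j ^ 2 * v j' ^ 2 = 0 := by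
      intro j j' hne
      have hexp : (∑ j, v j ^ 2) ^ 2
          = ∑ a : Fin r, ∑ b : Fin r, v a ^ 2 * v b ^ 2 := by
        rw [sq, Finset.sum_mul_sum]
      have hsum0 : ∑ a : Fin r, ∑ b : Fin r, v a ^ 2 * v b ^ 2 = ∑ a, v a ^ 4 := by
        rw [← hexp, hs1, h1]; norm_num
      -- the sum of off-diagonal terms is zero
      have hsplit : ∀ a : Fin r, ∑ b : Fin r, v a ^ 2 * v b ^ 2
          = v a ^ 4 + ∑ b ∈ Finset.univ.erase a, v a ^ 2 * v b ^ 2 := by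
        intro a
        rw [← Finset.sum_erase_add _ _ (Finset.mem_univ a)]
        ring
      have hoff : ∑ a : Fin r, ∑ b ∈ Finset.univ.erase a, v a ^ 2 * v b ^ 2 = 0 := by
        have := hsum0
        rw [Finset.sum_congr rfl fun a _ => hsplit a, Finset.sum_add_distrib] at this
        linarith
      have h2 := (Finset.sum_eq_zero_iff_of_nonneg
        (fun a _ => Finset.sum_nonneg fun b _ => mul_nonneg (sq_nonneg _) (sq_nonneg _))).mp
        hoff j (Finset.mem_univ j)
      exact (Finset.sum_eq_zero_iff_of_nonneg
        (fun b _ => mul_nonneg (sq_nonneg _) (sq_nonneg _))).mp h2 j'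
        (Finset.mem_erase.mpr ⟨hne.symm, Finset.mem_univ j'⟩)
    obtain ⟨i, hi⟩ : ∃ i, v i ≠ 0 := by
      by_contra hall
      push_neg at hall
      have : ∑ j, v j ^ 2 = 0 := Finset.sum_eq_zero fun j _ => by rw [hall j]; ring
      rw [hs1] at this; norm_num at this
    have hzero : ∀ j, j ≠ i → v j = 0 := by
      intro j hj
      have := hcross i j (fun h => hj h.symm)
      have hvi2 : v i ^ 2 ≠ 0 := pow_ne_zero _ hi
      have : v j ^ 2 = 0 := by
        rcases mul_eq_zero.mp this with h | h
        · exact absurd h hvi2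
        · exact h
      exact pow_eq_zero_iff (n := 2) (by norm_num) |>.mp this
    have hvi : v i ^ 2 = 1 := by
      have := hs1
      rw [Finset.sum_eq_single i (fun j _ hj => by rw [hzero j hj]; ring)
        (fun h => absurd (Finset.mem_univ i) h)] at this
      exact this
    have hwcol : ∀ k, w k = v i * A k i := by
      intro k
      rw [hwk, Finset.sum_eq_single i (fun j _ hj => by rw [hzero j hj]; ring)
        (fun h => absurd (Finset.mem_univ i) h)]
      ring
    have hvi' : v i = 1 ∨ v i = -1 := by
      have h0 : (v i - 1) * (v i + 1) = 0 := by nlinarith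
      rcases mul_eq_zero.mp h0 with h | h
      · left; linarith
      · right; linarith
    refine ⟨i, ?_⟩
    rcases hvi' with h | h
    · left; funext k; rw [hqeqw k, hwcol k, h]; ring
    · right; funext k; rw [hqeqw k, hwcol k, h]; ring
  · -- backward
    rintro ⟨i, hqi | hqi⟩
    · have hvi : ∀ j, v j = if j = i then 1 else 0 := by
        intro j
        rw [hvj j, hqi]
        exact hAentry j i
      rw [hl4, Finset.sum_congr rfl fun j _ => by rw [hvi j]]
      simp
    · have hvi : ∀ j, v j = if j = i then -1 else 0 := by
        intro j
        rw [hvj j, hqi]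
        simp only []
        have : ∑ k, A k j * -A k i = -(∑ k, A k j * A k i) := by
          rw [← Finset.sum_neg_distrib]; exact Finset.sum_congr rfl fun k _ => by ring
        rw [this, hAentry j i]
        split <;> norm_num
      rw [hl4, Finset.sum_congr rfl fun j _ => by rw [hvi j]]
      simp
      norm_num
end
end

section
/- Let x = (x_1,…,x_r) be a random vector in ℝ^r with i.i.d. BG(θ,σ²) entries, where θ ∈ (0,1] and σ > 0. Then for every ζ ∈ ℝ^r, E[(ζᵀx)⁴] = 3σ⁴θ[(1−θ)‖ζ‖₄⁴ + θ‖ζ‖₂⁴]. Equivalently, for q on the unit sphere of ℝ^p and A ∈ ℝ^{p×r}, E[−(1/(12θσ⁴))(qᵀAx)⁴] = −(1/4)[(1−θ)‖Aᵀq‖₄⁴ + θ‖Aᵀq‖₂⁴]. -/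
open Matrix MeasureTheory ProbabilityTheory Real
open scoped BigOperators ENNReal

noncomputable section

section helpers
open Filter Set
open scoped NNReal


lemma natcast_neg_one_lt (k : ℕ) : (-1 : ℝ) < (k : ℝ) :=
  lt_of_lt_of_le (by norm_num) (Nat.cast_nonneg k)

lemma tendsto_pow_mul_exp_neg_mul_sq {b : ℝ} (hb : 0 < b) (k : ℕ) :
    Tendsto (fun x : ℝ => x ^ k * exp (-b * x ^ 2)) atTop (nhds 0) := by
  have h := (rpow_mul_exp_neg_mul_sq_isLittleO_exp_neg hb (k : ℝ)).isBigO
  simp only [Real.rpow_natCast] at h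
  refine h.trans_tendsto ?_
  have : Tendsto (fun x : ℝ => (1/2) * x) atTop atTop :=
    Tendsto.const_mul_atTop (by norm_num) tendsto_id
  simpa [Function.comp_def, neg_mul] using
    (Real.tendsto_exp_neg_atTop_nhds_zero.comp this)

lemma integrableOn_pow_mul_exp_neg_mul_sq {b : ℝ} (hb : 0 < b) (k : ℕ) :
    IntegrableOn (fun x : ℝ => x ^ k * exp (-b * x ^ 2)) (Ioi 0) := by
  have h := integrableOn_rpow_mul_exp_neg_mul_sq hb (s := (k : ℝ)) (natcast_neg_one_lt k)
  simpa only [Real.rpow_natCast] using h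

lemma integrable_pow_mul_exp_neg_mul_sq {b : ℝ} (hb : 0 < b) (k : ℕ) :
    Integrable (fun x : ℝ => x ^ k * exp (-b * x ^ 2)) := by
  have h := integrable_rpow_mul_exp_neg_mul_sq hb (s := (k : ℝ)) (natcast_neg_one_lt k)
  simpa only [Real.rpow_natCast] using h

lemma gauss_rec {b : ℝ} (hb : 0 < b) (n : ℕ) :
    ∫ x in Ioi (0:ℝ), x ^ (n+2) * exp (-b * x ^ 2)
      = ((n+1 : ℝ)/(2*b)) * ∫ x in Ioi (0:ℝ), x ^ n * exp (-b * x ^ 2) := by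
  set f : ℝ → ℝ := fun x => x ^ (n+1) * exp (-b * x ^ 2) with hf
  set f' : ℝ → ℝ := fun x =>
    (n+1 : ℝ) * (x ^ n * exp (-b * x ^ 2)) - (2*b) * (x ^ (n+2) * exp (-b * x ^ 2)) with hf'
  have hderiv : ∀ x : ℝ, HasDerivAt f (f' x) x := by
    intro x
    have h1 : HasDerivAt (fun x : ℝ => x ^ (n+1)) ((n+1 : ℝ) * x ^ n) x := by
      simpa using hasDerivAt_pow (n+1) x
    have h2 : HasDerivAt (fun x : ℝ => -b * x ^ 2) (-b * (2 * x)) x := by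
      simpa using (hasDerivAt_pow 2 x).const_mul (-b)
    have h3 := h2.exp
    have := h1.mul h3
    refine HasDerivAt.congr_deriv this ?_
    show _ = (n+1 : ℝ) * (x ^ n * exp (-b * x ^ 2)) - (2*b) * (x ^ (n+2) * exp (-b * x ^ 2))
    ring
  have hcont : ContinuousWithinAt f (Ici 0) 0 := (hderiv 0).continuousAt.continuousWithinAt
  have hint : IntegrableOn f' (Ioi 0) := by
    exact ((integrableOn_pow_mul_exp_neg_mul_sq hb n).const_mul _).sub
      ((integrableOn_pow_mul_exp_neg_mul_sq hb (n+2)).const_mul _)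
  have htend : Tendsto f atTop (nhds 0) := tendsto_pow_mul_exp_neg_mul_sq hb (n+1)
  have key := integral_Ioi_of_hasDerivAt_of_tendsto hcont (fun x _ => hderiv x) hint htend
  have hf0 : f 0 = 0 := by simp [hf]
  rw [hf0, sub_zero] at key
  simp only [hf'] at key
  rw [integral_sub ((integrableOn_pow_mul_exp_neg_mul_sq hb n).const_mul _)
      ((integrableOn_pow_mul_exp_neg_mul_sq hb (n+2)).const_mul _),
    integral_const_mul, integral_const_mul] at key
  have h2b : (0:ℝ) < 2*b := by positivity
  rw [div_mul_eq_mul_div, eq_div_iff (ne_of_gt h2b)]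
  linarith [key]

lemma integral_even_pow_eq (b : ℝ) {k : ℕ} (hk : Even k) :
    ∫ x : ℝ, x ^ k * exp (-b * x ^ 2)
      = 2 * ∫ x in Ioi (0:ℝ), x ^ k * exp (-b * x ^ 2) := by
  rw [← integral_comp_abs (f := fun x => x ^ k * exp (-b * x ^ 2))]
  congr 1 with x
  rw [hk.pow_abs, sq_abs]

lemma integral_pow2_exp {b : ℝ} (hb : 0 < b) :
    ∫ x : ℝ, x ^ 2 * exp (-b * x ^ 2) = (1/(2*b)) * √(π/b) := by
  have h0 : ∫ x : ℝ, x ^ 0 * exp (-b * x ^ 2) = √(π/b) := by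
    simpa using integral_gaussian b
  have e2 := integral_even_pow_eq b (by decide : Even 2)
  have e0 := integral_even_pow_eq b (by decide : Even 0)
  have r : ∫ x in Ioi (0:ℝ), x ^ 2 * exp (-b * x ^ 2)
      = ((1:ℝ)/(2*b)) * ∫ x in Ioi (0:ℝ), x ^ 0 * exp (-b * x ^ 2) := by
    simpa using gauss_rec hb 0
  rw [e2, r, ← mul_assoc]
  rw [e0] at h0
  rw [mul_comm (2:ℝ) ((1:ℝ)/(2*b)), mul_assoc, h0]

lemma integral_pow4_exp {b : ℝ} (hb : 0 < b) :
    ∫ x : ℝ, x ^ 4 * exp (-b * x ^ 2) = (3/(4*b^2)) * √(π/b) := by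
  have e4 := integral_even_pow_eq b (by decide : Even 4)
  have e2 := integral_even_pow_eq b (by decide : Even 2)
  have r : ∫ x in Ioi (0:ℝ), x ^ 4 * exp (-b * x ^ 2)
      = ((3:ℝ)/(2*b)) * ∫ x in Ioi (0:ℝ), x ^ 2 * exp (-b * x ^ 2) := by
    have := gauss_rec hb 2
    norm_num at this
    convert this using 2 <;> norm_num
  have h2 := integral_pow2_exp hb
  rw [e2] at h2
  have hb' : b ≠ 0 := ne_of_gt hb
  rw [e4, r]
  have : ∫ x in Ioi (0:ℝ), x ^ 2 * exp (-b * x ^ 2) = (1/(2*b)) * √(π/b) / 2 := by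
    linarith
  rw [this]
  field_simp
  ring

lemma integral_odd_pow_exp (b : ℝ) {k : ℕ} (hk : Odd k) :
    ∫ x : ℝ, x ^ k * exp (-b * x ^ 2) = 0 := by
  set F : ℝ → ℝ := fun x => x ^ k * exp (-b * x ^ 2) with hF
  have h := (Measure.measurePreserving_neg (volume : Measure ℝ)).integral_comp
    (Homeomorph.neg ℝ).measurableEmbedding F
  have hodd : ∀ x : ℝ, F (-x) = - F x := by
    intro x
    simp only [hF]
    rw [hk.neg_pow, neg_sq]
    ring
  have : ∫ x : ℝ, F (-x) = - ∫ x : ℝ, F x := by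
    simp only [hodd]; exact integral_neg F
  rw [this] at h
  linarith [h]


lemma gaussianReal_integral_eq {v : ℝ≥0} (hv : v ≠ 0) (g : ℝ → ℝ) :
    ∫ x, g x ∂(gaussianReal 0 v) = ∫ x, gaussianPDFReal 0 v x * g x := by
  rw [gaussianReal_of_var_ne_zero 0 hv, gaussianPDF_def]
  have hmeas : Measurable fun x => (gaussianPDFReal 0 v x).toNNReal :=
    (measurable_gaussianPDFReal 0 v).real_toNNReal
  have : (fun x => ENNReal.ofReal (gaussianPDFReal 0 v x))
      = fun x => ((gaussianPDFReal 0 v x).toNNReal : ℝ≥0∞) := rfl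
  rw [this, integral_withDensity_eq_integral_smul hmeas g]
  congr 1 with x
  rw [NNReal.smul_def, Real.coe_toNNReal _ (gaussianPDFReal_nonneg 0 v x), smul_eq_mul]

lemma gaussianReal_integrable_eq {v : ℝ≥0} (hv : v ≠ 0) (g : ℝ → ℝ) :
    Integrable g (gaussianReal 0 v) ↔ Integrable (fun x => gaussianPDFReal 0 v x * g x) := by
  rw [gaussianReal_of_var_ne_zero 0 hv, gaussianPDF_def]
  have hmeas : Measurable fun x => (gaussianPDFReal 0 v x).toNNReal :=
    (measurable_gaussianPDFReal 0 v).real_toNNReal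
  have : (fun x => ENNReal.ofReal (gaussianPDFReal 0 v x))
      = fun x => ((gaussianPDFReal 0 v x).toNNReal : ℝ≥0∞) := rfl
  rw [this, integrable_withDensity_iff_integrable_smul hmeas]
  constructor <;> intro h <;> refine h.congr (Eventually.of_forall fun x => ?_) <;>
    simp only [NNReal.smul_def, Real.coe_toNNReal _ (gaussianPDFReal_nonneg 0 v x), smul_eq_mul]

lemma gaussianPDFReal_zero_mean (v : ℝ≥0) (x : ℝ) :
    gaussianPDFReal 0 v x = (√(2*π*v))⁻¹ * exp (-(2*(v:ℝ))⁻¹ * x^2) := by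
  rw [gaussianPDFReal]
  congr 1
  rw [sub_zero]
  congr 1
  field_simp

lemma le_b {v : ℝ≥0} (hv : v ≠ 0) : (0:ℝ) < (2*(v:ℝ))⁻¹ := by
  have : (0:ℝ) < (v:ℝ) := by positivity
  positivity

lemma sqrt_pib_eq {v : ℝ≥0} : √(π/((2*(v:ℝ))⁻¹)) = √(2*π*(v:ℝ)) := by
  congr 1
  rw [div_inv_eq_mul]
  ring

lemma sqrt_two_pi_v_pos {v : ℝ≥0} (hv : v ≠ 0) : (0:ℝ) < √(2*π*(v:ℝ)) := by
  have h0 : (0:ℝ) < (v:ℝ) := by positivity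
  have := Real.pi_pos
  positivity

lemma gaussianReal_moment_eq {v : ℝ≥0} (hv : v ≠ 0) (k : ℕ) :
    ∫ x, x ^ k ∂(gaussianReal 0 v)
      = (√(2*π*(v:ℝ)))⁻¹ * ∫ x : ℝ, x ^ k * exp (-(2*(v:ℝ))⁻¹ * x ^ 2) := by
  rw [gaussianReal_integral_eq hv]
  simp only [gaussianPDFReal_zero_mean]
  rw [← integral_const_mul]
  congr 1 with x
  ring

lemma gaussianReal_integrable_pow {v : ℝ≥0} (hv : v ≠ 0) (k : ℕ) :
    Integrable (fun x : ℝ => x ^ k) (gaussianReal 0 v) := by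
  rw [gaussianReal_integrable_eq hv]
  have h := (integrable_pow_mul_exp_neg_mul_sq (le_b hv) k).const_mul (√(2*π*(v:ℝ)))⁻¹
  refine h.congr (Eventually.of_forall fun x => ?_)
  show _ = gaussianPDFReal 0 v x * x ^ k
  rw [gaussianPDFReal_zero_mean]
  ring

lemma gaussianReal_moment_odd {v : ℝ≥0} (hv : v ≠ 0) {k : ℕ} (hk : Odd k) :
    ∫ x, x ^ k ∂(gaussianReal 0 v) = 0 := by
  rw [gaussianReal_moment_eq hv k, integral_odd_pow_exp _ hk, mul_zero]

lemma gaussianReal_moment_two {v : ℝ≥0} (hv : v ≠ 0) :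
    ∫ x, x ^ 2 ∂(gaussianReal 0 v) = (v:ℝ) := by
  rw [gaussianReal_moment_eq hv 2, integral_pow2_exp (le_b hv), sqrt_pib_eq]
  have h0 : (0:ℝ) < (v:ℝ) := by positivity
  have hs := sqrt_two_pi_v_pos hv
  rw [show (1:ℝ)/(2*(2*(v:ℝ))⁻¹) = (v:ℝ) by field_simp]
  rw [← mul_assoc, mul_comm (√(2*π*(v:ℝ)))⁻¹ (v:ℝ), mul_assoc,
    inv_mul_cancel₀ (ne_of_gt hs), mul_one]

lemma gaussianReal_moment_four {v : ℝ≥0} (hv : v ≠ 0) :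
    ∫ x, x ^ 4 ∂(gaussianReal 0 v) = 3 * (v:ℝ)^2 := by
  rw [gaussianReal_moment_eq hv 4, integral_pow4_exp (le_b hv), sqrt_pib_eq]
  have h0 : (0:ℝ) < (v:ℝ) := by positivity
  have hs := sqrt_two_pi_v_pos hv
  rw [show (3:ℝ)/(4*((2*(v:ℝ))⁻¹)^2) = 3*(v:ℝ)^2 by field_simp; ring]
  rw [← mul_assoc, mul_comm (√(2*π*(v:ℝ)))⁻¹ (3*(v:ℝ)^2), mul_assoc,
    inv_mul_cancel₀ (ne_of_gt hs), mul_one]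


lemma bernoulli_integrable (θ : ℝ) (g : ℝ → ℝ) : Integrable g (bernoulliReal θ) := by
  have h1 : Integrable g (Measure.dirac (1:ℝ)) :=
    (integrable_const (g 1)).congr (ae_eq_dirac g).symm
  have h0 : Integrable g (Measure.dirac (0:ℝ)) :=
    (integrable_const (g 0)).congr (ae_eq_dirac g).symm
  exact (h1.smul_measure ENNReal.ofReal_ne_top).add_measure
    (h0.smul_measure ENNReal.ofReal_ne_top)

lemma bernoulli_integral {θ : ℝ} (h0 : 0 ≤ θ) (h1 : θ ≤ 1) (g : ℝ → ℝ) :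
    ∫ x, g x ∂(bernoulliReal θ) = θ * g 1 + (1-θ) * g 0 := by
  rw [bernoulliReal, integral_add_measure
      (((integrable_const (g 1)).congr (ae_eq_dirac g).symm).smul_measure ENNReal.ofReal_ne_top)
      (((integrable_const (g 0)).congr (ae_eq_dirac g).symm).smul_measure ENNReal.ofReal_ne_top),
    integral_smul_measure, integral_smul_measure, integral_dirac, integral_dirac,
    ENNReal.toReal_ofReal h0, ENNReal.toReal_ofReal (by linarith : (0:ℝ) ≤ 1 - θ)]
  simp [smul_eq_mul]

theorem bernoulli_prob {θ : ℝ} (h0 : 0 ≤ θ) (h1 : θ ≤ 1) :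
    IsProbabilityMeasure (bernoulliReal θ) := by
  constructor
  rw [bernoulliReal]
  simp only [Measure.add_apply, Measure.smul_apply, measure_univ, smul_eq_mul, mul_one]
  rw [← ENNReal.ofReal_add h0 (by linarith), add_sub_cancel, ENNReal.ofReal_one]

lemma bgLaw_prob {θ σ2 : ℝ} (h0 : 0 ≤ θ) (h1 : θ ≤ 1) :
    IsProbabilityMeasure (bgLaw θ σ2) := by
  haveI := bernoulli_prob h0 h1
  rw [bgLaw]
  exact Measure.isProbabilityMeasure_map (measurable_fst.mul measurable_snd).aemeasurable

lemma bgLaw_integrable_pow {θ σ2 : ℝ} (h0 : 0 ≤ θ) (h1 : θ ≤ 1) (hσ : 0 < σ2) (k : ℕ) :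
    Integrable (fun x : ℝ => x ^ k) (bgLaw θ σ2) := by
  haveI := bernoulli_prob h0 h1
  have hv : σ2.toNNReal ≠ 0 := by
    simp [Real.toNNReal_eq_zero, not_le, hσ]
  rw [bgLaw, integrable_map_measure (Measurable.aestronglyMeasurable (by fun_prop))
    (by fun_prop : Measurable fun p : ℝ × ℝ => p.1 * p.2).aemeasurable]
  have h := (bernoulli_integrable θ (fun x => x ^ k)).mul_prod
    (gaussianReal_integrable_pow hv k)
  refine h.congr (Eventually.of_forall fun z => ?_)
  simp [Function.comp, mul_pow]

lemma bgLaw_moment {θ σ2 : ℝ} (h0 : 0 ≤ θ) (h1 : θ ≤ 1) (hσ : 0 < σ2) (k : ℕ) (hk : 1 ≤ k) :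
    ∫ x, x ^ k ∂(bgLaw θ σ2) = θ * ∫ x, x ^ k ∂(gaussianReal 0 σ2.toNNReal) := by
  haveI := bernoulli_prob h0 h1
  rw [bgLaw, integral_map (by fun_prop : Measurable fun p : ℝ × ℝ => p.1 * p.2).aemeasurable
    (Measurable.aestronglyMeasurable (by fun_prop))]
  have : ∀ z : ℝ × ℝ, (z.1 * z.2) ^ k = z.1 ^ k * z.2 ^ k := fun z => mul_pow _ _ _
  simp_rw [this]
  rw [integral_prod_mul (fun x => x ^ k) (fun y => y ^ k),
    bernoulli_integral h0 h1 (fun x => x ^ k)]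
  rw [one_pow, zero_pow (by omega : k ≠ 0)]
  ring


lemma pi_moments (μ : Measure ℝ) [IsProbabilityMeasure μ] (m2 m4 : ℝ)
    (hint : ∀ k : ℕ, Integrable (fun x : ℝ => x ^ k) μ)
    (h1 : ∫ x, x ^ 1 ∂μ = 0) (h2 : ∫ x, x ^ 2 ∂μ = m2)
    (h3 : ∫ x, x ^ 3 ∂μ = 0) (h4 : ∫ x, x ^ 4 ∂μ = m4) :
    ∀ (n : ℕ) (ζ : Fin n → ℝ),
    (∀ k : ℕ, k ≤ 4 →
      Integrable (fun x => (∑ j, ζ j * x j) ^ k) (Measure.pi fun _ : Fin n => μ)) ∧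
    (∫ x, (∑ j, ζ j * x j) ^ 1 ∂(Measure.pi fun _ : Fin n => μ)) = 0 ∧
    (∫ x, (∑ j, ζ j * x j) ^ 2 ∂(Measure.pi fun _ : Fin n => μ)) = m2 * ∑ j, ζ j ^ 2 ∧
    (∫ x, (∑ j, ζ j * x j) ^ 3 ∂(Measure.pi fun _ : Fin n => μ)) = 0 ∧
    (∫ x, (∑ j, ζ j * x j) ^ 4 ∂(Measure.pi fun _ : Fin n => μ))
      = m4 * (∑ j, ζ j ^ 4) + 3 * m2 ^ 2 * ((∑ j, ζ j ^ 2) ^ 2 - ∑ j, ζ j ^ 4) := by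
  have hμ0 : ∫ x : ℝ, x ^ 0 ∂μ = 1 := by simp
  intro n
  induction n with
  | zero =>
    intro ζ
    refine ⟨fun k hk => ?_, ?_, ?_, ?_, ?_⟩ <;> simp
  | succ n ih =>
    intro ζ
    set c : ℝ := ζ 0 with hc
    set ζ' : Fin n → ℝ := fun i => ζ i.succ with hζ'
    obtain ⟨ihint, ihm1, ihm2, ihm3, ihm4⟩ := ih ζ'
    set ν : Measure (Fin n → ℝ) := Measure.pi fun _ : Fin n => μ with hν
    set e := MeasurableEquiv.piFinSuccAbove (fun _ : Fin (n+1) => ℝ) 0 with he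
    have hmp : MeasurePreserving e (Measure.pi fun _ : Fin (n+1) => μ) (μ.prod ν) :=
      MeasureTheory.measurePreserving_piFinSuccAbove (fun _ : Fin (n+1) => μ) 0
    have hSe : ∀ f : Fin (n+1) → ℝ,
        (∑ j, ζ j * f j) = c * (e f).1 + ∑ i, ζ' i * (e f).2 i := by
      intro f
      have h2' : ∀ i : Fin n, (e f).2 i = f i.succ := fun i => by
        show f ((0 : Fin (n+1)).succAbove i) = f i.succ
        rw [Fin.succAbove_zero]
      rw [Fin.sum_univ_succ]
      have h1' : (e f).1 = f 0 := rfl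
      rw [h1']
      exact congrArg (fun t => ζ 0 * f 0 + t) (Finset.sum_congr rfl fun i _ => by rw [h2'])
    have hν0 : ∫ y, (∑ i, ζ' i * y i) ^ 0 ∂ν = 1 := by simp
    have hterm : ∀ (m l : ℕ), l ≤ 4 →
        Integrable (fun z : ℝ × (Fin n → ℝ) => z.1 ^ m * (∑ i, ζ' i * z.2 i) ^ l) (μ.prod ν) :=
      fun m l hl => (hint m).mul_prod (ihint l hl)
    have hsplit : ∀ (a : ℝ) (m l : ℕ),
        ∫ z : ℝ × (Fin n → ℝ), a * (z.1 ^ m * (∑ i, ζ' i * z.2 i) ^ l) ∂(μ.prod ν)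
          = a * ((∫ x, x ^ m ∂μ) * ∫ y, (∑ i, ζ' i * y i) ^ l ∂ν) := by
      intro a m l
      rw [integral_const_mul, integral_prod_mul (fun x => x ^ m) (fun y : Fin n → ℝ => (∑ i, ζ' i * y i) ^ l)]
    -- integrability over the product of each power of the sum
    have hI : ∀ k : ℕ, k ≤ 4 →
        Integrable (fun z : ℝ × (Fin n → ℝ) => (c * z.1 + ∑ i, ζ' i * z.2 i) ^ k) (μ.prod ν) := by
      intro k hk
      interval_cases k
      · simpa using (integrable_const (1:ℝ))
      · exact (((hterm 1 0 (by norm_num)).const_mul c).add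
          ((hterm 0 1 (by norm_num)).const_mul 1)).congr
          (Eventually.of_forall fun z => by simp only [Pi.add_apply]; ring)
      · exact ((((hterm 2 0 (by norm_num)).const_mul (c^2)).add
          ((hterm 1 1 (by norm_num)).const_mul (2*c))).add
          ((hterm 0 2 (by norm_num)).const_mul 1)).congr
          (Eventually.of_forall fun z => by simp only [Pi.add_apply]; ring)
      · exact (((((hterm 3 0 (by norm_num)).const_mul (c^3)).add
          ((hterm 2 1 (by norm_num)).const_mul (3*c^2))).add
          ((hterm 1 2 (by norm_num)).const_mul (3*c))).add
          ((hterm 0 3 (by norm_num)).const_mul 1)).congr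
          (Eventually.of_forall fun z => by simp only [Pi.add_apply]; ring)
      · exact ((((((hterm 4 0 (by norm_num)).const_mul (c^4)).add
          ((hterm 3 1 (by norm_num)).const_mul (4*c^3))).add
          ((hterm 2 2 (by norm_num)).const_mul (6*c^2))).add
          ((hterm 1 3 (by norm_num)).const_mul (4*c))).add
          ((hterm 0 4 (by norm_num)).const_mul 1)).congr
          (Eventually.of_forall fun z => by simp only [Pi.add_apply]; ring)
    have hIpi : ∀ k : ℕ, k ≤ 4 →
        Integrable (fun x => (∑ j, ζ j * x j) ^ k) (Measure.pi fun _ : Fin (n+1) => μ) := by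
      intro k hk
      have : (fun x : Fin (n+1) → ℝ => (∑ j, ζ j * x j) ^ k)
          = (fun z : ℝ × (Fin n → ℝ) => (c * z.1 + ∑ i, ζ' i * z.2 i) ^ k) ∘ e :=
        funext fun f => by rw [Function.comp_apply, hSe f]
      rw [this]
      exact (hmp.integrable_comp_emb e.measurableEmbedding).2 (hI k hk)
    have hM : ∀ k : ℕ,
        ∫ x, (∑ j, ζ j * x j) ^ k ∂(Measure.pi fun _ : Fin (n+1) => μ)
          = ∫ z : ℝ × (Fin n → ℝ), (c * z.1 + ∑ i, ζ' i * z.2 i) ^ k ∂(μ.prod ν) := by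
      intro k
      rw [← hmp.integral_comp e.measurableEmbedding
        (fun z : ℝ × (Fin n → ℝ) => (c * z.1 + ∑ i, ζ' i * z.2 i) ^ k)]
      congr 1 with f
      rw [hSe f]
    refine ⟨hIpi, ?_, ?_, ?_, ?_⟩
    · rw [hM 1]
      have hx : (fun z : ℝ × (Fin n → ℝ) => (c * z.1 + ∑ i, ζ' i * z.2 i) ^ 1)
          = fun z => c * (z.1 ^ 1 * (∑ i, ζ' i * z.2 i) ^ 0) + 1 * (z.1 ^ 0 * (∑ i, ζ' i * z.2 i) ^ 1) := funext fun z => by ring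
      rw [hx]
      have S2 : ∫ z : ℝ × (Fin n → ℝ), (c * (z.1 ^ 1 * (∑ i, ζ' i * z.2 i) ^ 0)) + 1 * (z.1 ^ 0 * (∑ i, ζ' i * z.2 i) ^ 1) ∂(μ.prod ν)
          = (∫ z : ℝ × (Fin n → ℝ), c * (z.1 ^ 1 * (∑ i, ζ' i * z.2 i) ^ 0) ∂(μ.prod ν))
            + ∫ z : ℝ × (Fin n → ℝ), 1 * (z.1 ^ 0 * (∑ i, ζ' i * z.2 i) ^ 1) ∂(μ.prod ν) :=
        integral_add ((hterm 1 0 (by norm_num)).const_mul _) ((hterm 0 1 (by norm_num)).const_mul _)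
      rw [S2]
      rw [hsplit c 1 0, hsplit 1 0 1]
      rw [hμ0, h1, hν0, ihm1]
      ring
    · rw [hM 2]
      have hx : (fun z : ℝ × (Fin n → ℝ) => (c * z.1 + ∑ i, ζ' i * z.2 i) ^ 2)
          = fun z => c^2 * (z.1 ^ 2 * (∑ i, ζ' i * z.2 i) ^ 0) + (2*c) * (z.1 ^ 1 * (∑ i, ζ' i * z.2 i) ^ 1) + 1 * (z.1 ^ 0 * (∑ i, ζ' i * z.2 i) ^ 2) := funext fun z => by ring
      rw [hx]
      have S3 : ∫ z : ℝ × (Fin n → ℝ), (c^2 * (z.1 ^ 2 * (∑ i, ζ' i * z.2 i) ^ 0) + (2*c) * (z.1 ^ 1 * (∑ i, ζ' i * z.2 i) ^ 1)) + 1 * (z.1 ^ 0 * (∑ i, ζ' i * z.2 i) ^ 2) ∂(μ.prod ν)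
          = (∫ z : ℝ × (Fin n → ℝ), c^2 * (z.1 ^ 2 * (∑ i, ζ' i * z.2 i) ^ 0) + (2*c) * (z.1 ^ 1 * (∑ i, ζ' i * z.2 i) ^ 1) ∂(μ.prod ν))
            + ∫ z : ℝ × (Fin n → ℝ), 1 * (z.1 ^ 0 * (∑ i, ζ' i * z.2 i) ^ 2) ∂(μ.prod ν) :=
        integral_add (((hterm 2 0 (by norm_num)).const_mul _).add ((hterm 1 1 (by norm_num)).const_mul _)) ((hterm 0 2 (by norm_num)).const_mul _)
      have S2 : ∫ z : ℝ × (Fin n → ℝ), (c^2 * (z.1 ^ 2 * (∑ i, ζ' i * z.2 i) ^ 0)) + (2*c) * (z.1 ^ 1 * (∑ i, ζ' i * z.2 i) ^ 1) ∂(μ.prod ν)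
          = (∫ z : ℝ × (Fin n → ℝ), c^2 * (z.1 ^ 2 * (∑ i, ζ' i * z.2 i) ^ 0) ∂(μ.prod ν))
            + ∫ z : ℝ × (Fin n → ℝ), (2*c) * (z.1 ^ 1 * (∑ i, ζ' i * z.2 i) ^ 1) ∂(μ.prod ν) :=
        integral_add ((hterm 2 0 (by norm_num)).const_mul _) ((hterm 1 1 (by norm_num)).const_mul _)
      rw [S3, S2]
      rw [hsplit (c^2) 2 0, hsplit (2*c) 1 1, hsplit 1 0 2]
      rw [hμ0, h1, h2, hν0, ihm1, ihm2]
      rw [Fin.sum_univ_succ (f := fun j => ζ j ^ 2)]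
      ring
    · rw [hM 3]
      have hx : (fun z : ℝ × (Fin n → ℝ) => (c * z.1 + ∑ i, ζ' i * z.2 i) ^ 3)
          = fun z => c^3 * (z.1 ^ 3 * (∑ i, ζ' i * z.2 i) ^ 0) + (3*c^2) * (z.1 ^ 2 * (∑ i, ζ' i * z.2 i) ^ 1) + (3*c) * (z.1 ^ 1 * (∑ i, ζ' i * z.2 i) ^ 2) + 1 * (z.1 ^ 0 * (∑ i, ζ' i * z.2 i) ^ 3) := funext fun z => by ring
      rw [hx]
      have S4 : ∫ z : ℝ × (Fin n → ℝ), (c^3 * (z.1 ^ 3 * (∑ i, ζ' i * z.2 i) ^ 0) + (3*c^2) * (z.1 ^ 2 * (∑ i, ζ' i * z.2 i) ^ 1) + (3*c) * (z.1 ^ 1 * (∑ i, ζ' i * z.2 i) ^ 2)) + 1 * (z.1 ^ 0 * (∑ i, ζ' i * z.2 i) ^ 3) ∂(μ.prod ν)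
          = (∫ z : ℝ × (Fin n → ℝ), c^3 * (z.1 ^ 3 * (∑ i, ζ' i * z.2 i) ^ 0) + (3*c^2) * (z.1 ^ 2 * (∑ i, ζ' i * z.2 i) ^ 1) + (3*c) * (z.1 ^ 1 * (∑ i, ζ' i * z.2 i) ^ 2) ∂(μ.prod ν))
            + ∫ z : ℝ × (Fin n → ℝ), 1 * (z.1 ^ 0 * (∑ i, ζ' i * z.2 i) ^ 3) ∂(μ.prod ν) :=
        integral_add ((((hterm 3 0 (by norm_num)).const_mul _).add ((hterm 2 1 (by norm_num)).const_mul _)).add ((hterm 1 2 (by norm_num)).const_mul _)) ((hterm 0 3 (by norm_num)).const_mul _)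
      have S3 : ∫ z : ℝ × (Fin n → ℝ), (c^3 * (z.1 ^ 3 * (∑ i, ζ' i * z.2 i) ^ 0) + (3*c^2) * (z.1 ^ 2 * (∑ i, ζ' i * z.2 i) ^ 1)) + (3*c) * (z.1 ^ 1 * (∑ i, ζ' i * z.2 i) ^ 2) ∂(μ.prod ν)
          = (∫ z : ℝ × (Fin n → ℝ), c^3 * (z.1 ^ 3 * (∑ i, ζ' i * z.2 i) ^ 0) + (3*c^2) * (z.1 ^ 2 * (∑ i, ζ' i * z.2 i) ^ 1) ∂(μ.prod ν))
            + ∫ z : ℝ × (Fin n → ℝ), (3*c) * (z.1 ^ 1 * (∑ i, ζ' i * z.2 i) ^ 2) ∂(μ.prod ν) :=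
        integral_add (((hterm 3 0 (by norm_num)).const_mul _).add ((hterm 2 1 (by norm_num)).const_mul _)) ((hterm 1 2 (by norm_num)).const_mul _)
      have S2 : ∫ z : ℝ × (Fin n → ℝ), (c^3 * (z.1 ^ 3 * (∑ i, ζ' i * z.2 i) ^ 0)) + (3*c^2) * (z.1 ^ 2 * (∑ i, ζ' i * z.2 i) ^ 1) ∂(μ.prod ν)
          = (∫ z : ℝ × (Fin n → ℝ), c^3 * (z.1 ^ 3 * (∑ i, ζ' i * z.2 i) ^ 0) ∂(μ.prod ν))
            + ∫ z : ℝ × (Fin n → ℝ), (3*c^2) * (z.1 ^ 2 * (∑ i, ζ' i * z.2 i) ^ 1) ∂(μ.prod ν) :=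
        integral_add ((hterm 3 0 (by norm_num)).const_mul _) ((hterm 2 1 (by norm_num)).const_mul _)
      rw [S4, S3, S2]
      rw [hsplit (c^3) 3 0, hsplit (3*c^2) 2 1, hsplit (3*c) 1 2, hsplit 1 0 3]
      rw [hμ0, h1, h2, h3, hν0, ihm1, ihm2, ihm3]
      ring
    · rw [hM 4]
      have hx : (fun z : ℝ × (Fin n → ℝ) => (c * z.1 + ∑ i, ζ' i * z.2 i) ^ 4)
          = fun z => c^4 * (z.1 ^ 4 * (∑ i, ζ' i * z.2 i) ^ 0) + (4*c^3) * (z.1 ^ 3 * (∑ i, ζ' i * z.2 i) ^ 1) + (6*c^2) * (z.1 ^ 2 * (∑ i, ζ' i * z.2 i) ^ 2) + (4*c) * (z.1 ^ 1 * (∑ i, ζ' i * z.2 i) ^ 3) + 1 * (z.1 ^ 0 * (∑ i, ζ' i * z.2 i) ^ 4) := funext fun z => by ring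
      rw [hx]
      have S5 : ∫ z : ℝ × (Fin n → ℝ), (c^4 * (z.1 ^ 4 * (∑ i, ζ' i * z.2 i) ^ 0) + (4*c^3) * (z.1 ^ 3 * (∑ i, ζ' i * z.2 i) ^ 1) + (6*c^2) * (z.1 ^ 2 * (∑ i, ζ' i * z.2 i) ^ 2) + (4*c) * (z.1 ^ 1 * (∑ i, ζ' i * z.2 i) ^ 3)) + 1 * (z.1 ^ 0 * (∑ i, ζ' i * z.2 i) ^ 4) ∂(μ.prod ν)
          = (∫ z : ℝ × (Fin n → ℝ), c^4 * (z.1 ^ 4 * (∑ i, ζ' i * z.2 i) ^ 0) + (4*c^3) * (z.1 ^ 3 * (∑ i, ζ' i * z.2 i) ^ 1) + (6*c^2) * (z.1 ^ 2 * (∑ i, ζ' i * z.2 i) ^ 2) + (4*c) * (z.1 ^ 1 * (∑ i, ζ' i * z.2 i) ^ 3) ∂(μ.prod ν))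
            + ∫ z : ℝ × (Fin n → ℝ), 1 * (z.1 ^ 0 * (∑ i, ζ' i * z.2 i) ^ 4) ∂(μ.prod ν) :=
        integral_add (((((hterm 4 0 (by norm_num)).const_mul _).add ((hterm 3 1 (by norm_num)).const_mul _)).add ((hterm 2 2 (by norm_num)).const_mul _)).add ((hterm 1 3 (by norm_num)).const_mul _)) ((hterm 0 4 (by norm_num)).const_mul _)
      have S4 : ∫ z : ℝ × (Fin n → ℝ), (c^4 * (z.1 ^ 4 * (∑ i, ζ' i * z.2 i) ^ 0) + (4*c^3) * (z.1 ^ 3 * (∑ i, ζ' i * z.2 i) ^ 1) + (6*c^2) * (z.1 ^ 2 * (∑ i, ζ' i * z.2 i) ^ 2)) + (4*c) * (z.1 ^ 1 * (∑ i, ζ' i * z.2 i) ^ 3) ∂(μ.prod ν)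
          = (∫ z : ℝ × (Fin n → ℝ), c^4 * (z.1 ^ 4 * (∑ i, ζ' i * z.2 i) ^ 0) + (4*c^3) * (z.1 ^ 3 * (∑ i, ζ' i * z.2 i) ^ 1) + (6*c^2) * (z.1 ^ 2 * (∑ i, ζ' i * z.2 i) ^ 2) ∂(μ.prod ν))
            + ∫ z : ℝ × (Fin n → ℝ), (4*c) * (z.1 ^ 1 * (∑ i, ζ' i * z.2 i) ^ 3) ∂(μ.prod ν) :=
        integral_add ((((hterm 4 0 (by norm_num)).const_mul _).add ((hterm 3 1 (by norm_num)).const_mul _)).add ((hterm 2 2 (by norm_num)).const_mul _)) ((hterm 1 3 (by norm_num)).const_mul _)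
      have S3 : ∫ z : ℝ × (Fin n → ℝ), (c^4 * (z.1 ^ 4 * (∑ i, ζ' i * z.2 i) ^ 0) + (4*c^3) * (z.1 ^ 3 * (∑ i, ζ' i * z.2 i) ^ 1)) + (6*c^2) * (z.1 ^ 2 * (∑ i, ζ' i * z.2 i) ^ 2) ∂(μ.prod ν)
          = (∫ z : ℝ × (Fin n → ℝ), c^4 * (z.1 ^ 4 * (∑ i, ζ' i * z.2 i) ^ 0) + (4*c^3) * (z.1 ^ 3 * (∑ i, ζ' i * z.2 i) ^ 1) ∂(μ.prod ν))
            + ∫ z : ℝ × (Fin n → ℝ), (6*c^2) * (z.1 ^ 2 * (∑ i, ζ' i * z.2 i) ^ 2) ∂(μ.prod ν) :=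
        integral_add (((hterm 4 0 (by norm_num)).const_mul _).add ((hterm 3 1 (by norm_num)).const_mul _)) ((hterm 2 2 (by norm_num)).const_mul _)
      have S2 : ∫ z : ℝ × (Fin n → ℝ), (c^4 * (z.1 ^ 4 * (∑ i, ζ' i * z.2 i) ^ 0)) + (4*c^3) * (z.1 ^ 3 * (∑ i, ζ' i * z.2 i) ^ 1) ∂(μ.prod ν)
          = (∫ z : ℝ × (Fin n → ℝ), c^4 * (z.1 ^ 4 * (∑ i, ζ' i * z.2 i) ^ 0) ∂(μ.prod ν))
            + ∫ z : ℝ × (Fin n → ℝ), (4*c^3) * (z.1 ^ 3 * (∑ i, ζ' i * z.2 i) ^ 1) ∂(μ.prod ν) :=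
        integral_add ((hterm 4 0 (by norm_num)).const_mul _) ((hterm 3 1 (by norm_num)).const_mul _)
      rw [S5, S4, S3, S2]
      rw [hsplit (c^4) 4 0, hsplit (4*c^3) 3 1, hsplit (6*c^2) 2 2, hsplit (4*c) 1 3, hsplit 1 0 4]
      rw [hμ0, h1, h2, h3, h4, hν0, ihm1, ihm2, ihm3, ihm4]
      rw [Fin.sum_univ_succ (f := fun j => ζ j ^ 2), Fin.sum_univ_succ (f := fun j => ζ j ^ 4)]
      ring

end helpers

theorem stmt1 (r : ℕ) (hr : 1 ≤ r) (θ σ : ℝ) (hθ0 : 0 < θ) (hθ1 : θ ≤ 1) (hσ : 0 < σ) :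
    (∀ ζ : Fin r → ℝ,
      (∫ x : Fin r → ℝ, (∑ j, ζ j * x j) ^ 4 ∂(bgVec r θ (σ ^ 2)))
        = 3 * σ ^ 4 * θ * ((1 - θ) * l4p4 ζ + θ * (l2sq ζ) ^ 2)) ∧
    (∀ (p : ℕ) (A : Matrix (Fin p) (Fin r) ℝ) (q : Fin p → ℝ), l2sq q = 1 →
      (∫ x : Fin r → ℝ, (-(1 / (12 * θ * σ ^ 4)) * (q ⬝ᵥ (A *ᵥ x)) ^ 4) ∂(bgVec r θ (σ ^ 2)))
        = -(1/4) * ((1 - θ) * l4p4 (zeta A q) + θ * (l2sq (zeta A q)) ^ 2)) := by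
  have hθ0' : (0:ℝ) ≤ θ := le_of_lt hθ0
  have hσ2 : (0:ℝ) < σ ^ 2 := by positivity
  have hv : (σ ^ 2).toNNReal ≠ 0 := by
    simp [Real.toNNReal_eq_zero, not_le, hσ2, hσ.ne']
  have hvc : (((σ ^ 2).toNNReal : NNReal) : ℝ) = σ ^ 2 := Real.coe_toNNReal _ (le_of_lt hσ2)
  haveI : IsProbabilityMeasure (bgLaw θ (σ ^ 2)) := bgLaw_prob hθ0' hθ1
  have hint : ∀ k : ℕ, Integrable (fun x : ℝ => x ^ k) (bgLaw θ (σ ^ 2)) :=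
    fun k => bgLaw_integrable_pow hθ0' hθ1 hσ2 k
  have h1 : ∫ x, x ^ 1 ∂(bgLaw θ (σ ^ 2)) = 0 := by
    rw [bgLaw_moment hθ0' hθ1 hσ2 1 (by norm_num),
      gaussianReal_moment_odd hv (⟨0, by norm_num⟩ : Odd 1), mul_zero]
  have h3 : ∫ x, x ^ 3 ∂(bgLaw θ (σ ^ 2)) = 0 := by
    rw [bgLaw_moment hθ0' hθ1 hσ2 3 (by norm_num),
      gaussianReal_moment_odd hv (⟨1, by norm_num⟩ : Odd 3), mul_zero]
  have h2 : ∫ x, x ^ 2 ∂(bgLaw θ (σ ^ 2)) = θ * σ ^ 2 := by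
    rw [bgLaw_moment hθ0' hθ1 hσ2 2 (by norm_num), gaussianReal_moment_two hv, hvc]
  have h4 : ∫ x, x ^ 4 ∂(bgLaw θ (σ ^ 2)) = θ * (3 * (σ ^ 2) ^ 2) := by
    rw [bgLaw_moment hθ0' hθ1 hσ2 4 (by norm_num), gaussianReal_moment_four hv, hvc]
  have key : ∀ ζ : Fin r → ℝ,
      (∫ x : Fin r → ℝ, (∑ j, ζ j * x j) ^ 4 ∂(bgVec r θ (σ ^ 2)))
        = 3 * σ ^ 4 * θ * ((1 - θ) * l4p4 ζ + θ * (l2sq ζ) ^ 2) := by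
    intro ζ
    obtain ⟨-, -, -, -, hm4⟩ :=
      pi_moments (bgLaw θ (σ ^ 2)) (θ * σ ^ 2) (θ * (3 * (σ ^ 2) ^ 2)) hint h1 h2 h3 h4 r ζ
    rw [bgVec, hm4, l4p4, l2sq]
    ring
  refine ⟨key, fun p A q _ => ?_⟩
  have hdot : ∀ x : Fin r → ℝ, q ⬝ᵥ (A *ᵥ x) = ∑ j, zeta A q j * x j := by
    intro x
    rw [Matrix.dotProduct_mulVec]
    simp [zeta, Matrix.mulVec_transpose, dotProduct]
  simp_rw [hdot]
  rw [MeasureTheory.integral_const_mul, key (zeta A q)]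
  have hθ : θ ≠ 0 := ne_of_gt hθ0
  have hσ' : σ ≠ 0 := ne_of_gt hσ
  field_simp
  ring


end
end

section
/- Assume θ ≤ 1/6 (θ > 0). Let q ∈ ℝ^p be a unit vector with Aᵀq ≠ 0 that satisfies the first- and second-order optimality conditions for minimizing f over the unit sphere: grad f(q) = 0 and vᵀ Hess f(q) v ≥ 0 for all v ∈ ℝ^p. Then q = a_i or q = −a_i for some column a_i of A. -/
open Matrix MeasureTheory ProbabilityTheory Real
open scoped BigOperators ENNReal

noncomputable section

-- aux lemmas
lemma vecMulVec_mulVec' {p : ℕ} (u v x : Fin p → ℝ) :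
    Matrix.vecMulVec u v *ᵥ x = (v ⬝ᵥ x) • u := by
  ext i
  simp only [Matrix.vecMulVec, Matrix.mulVec, dotProduct, Matrix.of_apply, Pi.smul_apply,
    smul_eq_mul, Finset.sum_mul]
  exact Finset.sum_congr rfl fun k _ => by ring

lemma proj_mulVec {p : ℕ} (q x : Fin p → ℝ) :
    proj q *ᵥ x = x - (q ⬝ᵥ x) • q := by
  rw [proj, Matrix.sub_mulVec, Matrix.one_mulVec, vecMulVec_mulVec']

lemma dot_mulVec' {p r : ℕ} (A : Matrix (Fin p) (Fin r) ℝ) (v : Fin p → ℝ) (w : Fin r → ℝ) :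
    v ⬝ᵥ (A *ᵥ w) = (Aᵀ *ᵥ v) ⬝ᵥ w := by
  rw [Matrix.dotProduct_mulVec, Matrix.mulVec_transpose]

lemma sum_two {n : ℕ} (j k : Fin n) (h : j ≠ k) (f : Fin n → ℝ)
    (hf : ∀ m, m ≠ j → m ≠ k → f m = 0) : ∑ m, f m = f j + f k := by
  rw [Finset.sum_eq_add_of_mem j k (Finset.mem_univ _) (Finset.mem_univ _) h]
  intro m _ hm
  exact hf m hm.1 hm.2

lemma diag_mulVec {n : ℕ} (d x : Fin n → ℝ) :
    Matrix.diagonal d *ᵥ x = fun i => d i * x i := by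
  ext i; rw [Matrix.mulVec_diagonal]

set_option maxHeartbeats 2000000 in
theorem stmt2 (p r : ℕ) (hr : 1 ≤ r) (hrp : r ≤ p)
    (A : Matrix (Fin p) (Fin r) ℝ) (hA : Aᵀ * A = 1)
    (θ : ℝ) (hθ0 : 0 < θ) (hθ : θ ≤ 1/6)
    (q : Fin p → ℝ) (hq : l2sq q = 1) (hnz : zeta A q ≠ 0)
    (hgrad : gradf θ A q = 0)
    (hhess : ∀ v : Fin p → ℝ, 0 ≤ qform (hessf θ A q) v) :
    ∃ i : Fin r, q = (fun k => A k i) ∨ q = (fun k => -A k i) := by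
  set ζ : Fin r → ℝ := zeta A q with hζ
  have hθ1 : (0:ℝ) < 1 - θ := by linarith
  -- AᵀA = 1 actions
  have hAtA : ∀ w : Fin r → ℝ, Aᵀ *ᵥ (A *ᵥ w) = w := by
    intro w; rw [Matrix.mulVec_mulVec, hA, Matrix.one_mulVec]
  have hdotq : ∀ w : Fin r → ℝ, q ⬝ᵥ (A *ᵥ w) = ζ ⬝ᵥ w := by
    intro w; rw [dot_mulVec', hζ]; rfl
  -- the gradient vector
  set g : Fin p → ℝ := (1 - θ) • (A *ᵥ fun j => ζ j ^ 3) + (θ * l2sq ζ) • (A *ᵥ ζ) with hg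
  have hPg : proj q *ᵥ g = 0 := by
    have := hgrad
    rw [gradf, neg_eq_zero] at this
    exact this
  have hgq : g = (q ⬝ᵥ g) • q := by
    have := proj_mulVec q g
    rw [hPg] at this
    linear_combination (norm := module) -this
  set lam : ℝ := q ⬝ᵥ g with hlam
  have hlamval : lam = (1 - θ) * l4p4 ζ + θ * (l2sq ζ)^2 := by
    rw [hlam, hg, dotProduct_add, dotProduct_smul, dotProduct_smul, hdotq, hdotq]
    have h1 : ζ ⬝ᵥ (fun j => ζ j ^ 3) = l4p4 ζ := by
      simp [dotProduct, l4p4]; exact Finset.sum_congr rfl fun k _ => by ring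
    have h2 : ζ ⬝ᵥ ζ = l2sq ζ := by
      simp [dotProduct, l2sq]; exact Finset.sum_congr rfl fun k _ => by ring
    rw [h1, h2]; simp only [smul_eq_mul]; ring
  have hl4pos : 0 < l4p4 ζ := by
    obtain ⟨j, hj⟩ := Function.ne_iff.mp hnz
    have h2 : (0:ℝ) < ζ j ^ 2 := lt_of_le_of_ne (sq_nonneg _) (Ne.symm (pow_ne_zero 2 hj))
    have h4 : (0:ℝ) < ζ j ^ 4 := by nlinarith
    show (0:ℝ) < ∑ i, ζ i ^ 4
    exact h4.trans_le (Finset.single_le_sum (f := fun i => ζ i ^ 4) (fun i _ => by positivity) (Finset.mem_univ j))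
  have hl2nn : 0 ≤ l2sq ζ := Finset.sum_nonneg fun i _ => by positivity
  have hlampos : 0 < lam := by
    rw [hlamval]; have : 0 ≤ θ * (l2sq ζ)^2 := by positivity
    nlinarith
  -- apply Aᵀ
  have hAtg : Aᵀ *ᵥ g = (1 - θ) • (fun j => ζ j ^ 3) + (θ * l2sq ζ) • ζ := by
    rw [hg, Matrix.mulVec_add, Matrix.mulVec_smul, Matrix.mulVec_smul, hAtA, hAtA]
  have hAtg2 : Aᵀ *ᵥ g = lam • ζ := by
    rw [hgq, Matrix.mulVec_smul]; rfl
  have hcomp : ∀ j, (1 - θ) * ζ j ^ 3 + θ * l2sq ζ * ζ j = lam * ζ j := by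
    intro j
    have := congrFun (hAtg.symm.trans hAtg2) j
    simpa [smul_eq_mul, mul_assoc] using this
  -- q = A ζ
  have hqA : A *ᵥ ζ = q := by
    have hw : (1 - θ) • (fun j => ζ j ^ 3) + (θ * l2sq ζ) • ζ = lam • ζ := hAtg.symm.trans hAtg2
    have : A *ᵥ ((1 - θ) • (fun j => ζ j ^ 3) + (θ * l2sq ζ) • ζ) = A *ᵥ (lam • ζ) := by rw [hw]
    rw [Matrix.mulVec_add, Matrix.mulVec_smul, Matrix.mulVec_smul, Matrix.mulVec_smul] at this
    have hg' : g = lam • (A *ᵥ ζ) := by rw [hg, ← this]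
    have : lam • (A *ᵥ ζ) = lam • q := by rw [← hg', hgq]
    exact smul_right_injective _ (ne_of_gt hlampos) this
  -- l2sq ζ = 1
  have hS : l2sq ζ = 1 := by
    have h2 : ζ ⬝ᵥ ζ = l2sq ζ := by
      simp [dotProduct, l2sq]; exact Finset.sum_congr rfl fun k _ => by ring
    have h3 : q ⬝ᵥ q = l2sq q := by
      simp [dotProduct, l2sq]; exact Finset.sum_congr rfl fun k _ => by ring
    have := hdotq ζ
    rw [hqA, h3, hq, h2] at this
    exact this.symm
  -- dichotomy
  set c : ℝ := (lam - θ) / (1 - θ) with hc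
  have hdich : ∀ j, ζ j = 0 ∨ ζ j ^ 2 = c := by
    intro j
    have := hcomp j
    rw [hS] at this
    rcases eq_or_ne (ζ j) 0 with h | h
    · exact Or.inl h
    · right
      rw [hc]
      field_simp
      have hj3 : (1 - θ) * ζ j ^ 2 = lam - θ := by
        have := mul_right_cancel₀ h (by nlinarith : ((1 - θ) * ζ j ^ 2 + θ) * ζ j = lam * ζ j)
        linarith
      linarith [hj3]
  -- uniqueness of nonzero coordinate
  have hcc : ∀ j, ζ j ≠ 0 → ζ j ^ 2 = c := fun j hj => (hdich j).resolve_left hj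
  have hAAt : ∀ x : Fin p → ℝ, (A * Aᵀ) *ᵥ x = A *ᵥ (Aᵀ *ᵥ x) :=
    fun x => (Matrix.mulVec_mulVec ..).symm
  have hl4c : l4p4 ζ = c := by
    have h1 : (∑ m, ζ m ^ 4) = ∑ m, c * ζ m ^ 2 := by
      refine Finset.sum_congr rfl fun m _ => ?_
      rcases hdich m with h | h
      · rw [h]; ring
      · rw [← h]; ring
    have h2 : (∑ m, c * ζ m ^ 2) = c * l2sq ζ := by rw [l2sq, Finset.mul_sum]
    show (∑ m, ζ m ^ 4) = c
    rw [h1, h2, hS, mul_one]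
  have huniq : ∀ j k : Fin r, ζ j ≠ 0 → ζ k ≠ 0 → j = k := by
    intro j k hj hk
    by_contra hjk
    have hcpos : 0 < c := by
      rw [← hcc j hj]
      exact lt_of_le_of_ne (sq_nonneg _) (Ne.symm (pow_ne_zero 2 hj))
    set w : Fin r → ℝ := fun m => if m = j then ζ k else if m = k then -ζ j else 0 with hw
    have hwj : w j = ζ k := by simp [hw]
    have hwk : w k = -ζ j := by simp [hw, Ne.symm hjk]
    have hwm : ∀ m, m ≠ j → m ≠ k → w m = 0 := by intro m h1 h2; simp [hw, h1, h2]
    set v : Fin p → ℝ := A *ᵥ w with hv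
    have hAtv : Aᵀ *ᵥ v = w := hAtA w
    have hvdot : ∀ u : Fin r → ℝ, v ⬝ᵥ (A *ᵥ u) = w ⬝ᵥ u := by
      intro u; rw [dot_mulVec', hAtv]
    have hζw : ζ ⬝ᵥ w = 0 := by
      show (∑ m, ζ m * w m) = 0
      rw [sum_two j k hjk _ (fun m h1 h2 => by rw [hwm m h1 h2, mul_zero]), hwj, hwk]
      ring
    have hqv : q ⬝ᵥ v = 0 := by rw [hv, hdotq, hζw]
    have hvq : v ⬝ᵥ q = 0 := by rw [dotProduct_comm, hqv]
    have hPv : proj q *ᵥ v = v := by rw [proj_mulVec, hqv, zero_smul, sub_zero]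
    have hvP : ∀ x : Fin p → ℝ, v ⬝ᵥ (proj q *ᵥ x) = v ⬝ᵥ x := by
      intro x
      rw [proj_mulVec, dotProduct_sub, dotProduct_smul, hvq]
      simp
    have hww : w ⬝ᵥ w = 2 * c := by
      show (∑ m, w m * w m) = 2 * c
      rw [sum_two j k hjk _ (fun m h1 h2 => by rw [hwm m h1 h2, mul_zero]), hwj, hwk]
      linear_combination hcc j hj + hcc k hk
    have hvv : v ⬝ᵥ v = 2 * c := by
      have h := hvdot w
      rw [← hv, hww] at h
      exact h
    -- first quadratic piece
    have hBv : v ⬝ᵥ (((3 : ℝ) • (A * Matrix.diagonal (fun m => ζ m ^ 2) * Aᵀ)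
        - l4p4 ζ • (1 : Matrix (Fin p) (Fin p) ℝ)) *ᵥ v) = 4 * c ^ 2 := by
      rw [Matrix.sub_mulVec, Matrix.smul_mulVec, Matrix.smul_mulVec,
        Matrix.one_mulVec, dotProduct_sub, dotProduct_smul, dotProduct_smul,
        ← Matrix.mulVec_mulVec, ← Matrix.mulVec_mulVec, hAtv, hvdot, diag_mulVec,
        hvv, hl4c]
      have hsum : (w ⬝ᵥ fun i => ζ i ^ 2 * w i) = 2 * c ^ 2 := by
        show (∑ m, w m * (ζ m ^ 2 * w m)) = 2 * c ^ 2
        rw [sum_two j k hjk _ (fun m h1 h2 => by rw [hwm m h1 h2]; ring), hwj, hwk]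
        linear_combination 2 * ζ k ^ 2 * hcc j hj + 2 * c * hcc k hk
      rw [hsum]
      simp only [smul_eq_mul]
      ring
    -- second quadratic piece
    have hCv : v ⬝ᵥ ((l2sq ζ • (A * Aᵀ)
        + (2 : ℝ) • (A * Aᵀ * Matrix.vecMulVec q q * (A * Aᵀ))
        - (l2sq ζ) ^ 2 • (1 : Matrix (Fin p) (Fin p) ℝ)) *ᵥ v) = 0 := by
      have h1 : (A * Aᵀ) *ᵥ v = v := by rw [hAAt, hAtv, ← hv]
      have hmid : (A * Aᵀ * Matrix.vecMulVec q q * (A * Aᵀ)) *ᵥ v = 0 := by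
        rw [← Matrix.mulVec_mulVec, h1, ← Matrix.mulVec_mulVec, vecMulVec_mulVec',
          hqv, zero_smul, Matrix.mulVec_zero]
      rw [Matrix.sub_mulVec, Matrix.add_mulVec, Matrix.smul_mulVec,
        Matrix.smul_mulVec, Matrix.smul_mulVec, Matrix.one_mulVec, hmid,
        h1, dotProduct_sub, dotProduct_add, dotProduct_smul, dotProduct_smul,
        dotProduct_smul, hvv, hS]
      simp
    -- the quadratic form value
    have hqf : qform (hessf θ A q) v = -(4 * (1 - θ) * c ^ 2) := by
      rw [qform, hessf, Matrix.sub_mulVec, Matrix.neg_mulVec, Matrix.smul_mulVec,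
        Matrix.smul_mulVec, dotProduct_sub, dotProduct_neg, dotProduct_smul,
        dotProduct_smul, ← Matrix.mulVec_mulVec, ← Matrix.mulVec_mulVec, hPv, hvP,
        ← Matrix.mulVec_mulVec, ← Matrix.mulVec_mulVec, hPv, hvP, ← hζ, hBv, hCv]
      simp only [smul_eq_mul]
      ring
    have := hhess v
    rw [hqf] at this
    nlinarith
  -- conclusion
  obtain ⟨i, hi⟩ := Function.ne_iff.mp hnz
  have hother : ∀ m : Fin r, m ≠ i → ζ m = 0 := by
    intro m hm
    by_contra h
    exact hm (huniq m i h hi)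
  have hζi2 : ζ i ^ 2 = 1 := by
    have : l2sq ζ = ζ i ^ 2 := by
      rw [l2sq]
      rw [Finset.sum_eq_single i (fun m _ hm => by rw [hother m hm]; ring)
        (fun h => absurd (Finset.mem_univ i) h)]
    rw [← this, hS]
  have hqk : ∀ k, q k = A k i * ζ i := by
    intro k
    have := congrFun hqA k
    rw [← this]
    show (∑ m, A k m * ζ m) = A k i * ζ i
    exact Finset.sum_eq_single i (fun m _ hm => by rw [hother m hm, mul_zero])
      (fun h => absurd (Finset.mem_univ i) h)
  refine ⟨i, ?_⟩
  rcases mul_eq_zero.mp (by nlinarith : (ζ i - 1) * (ζ i + 1) = 0) with h | h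
  · left
    funext k
    rw [hqk k, sub_eq_zero.mp h, mul_one]
  · right
    funext k
    rw [hqk k, (by linarith : ζ i = -1)]
    ring


end
end

section
/- Assume 0 < θ < 1 and let C⋆ be a constant with C⋆ > (1/2)√(θ/(1−θ)). Let q ∈ ℝ^p be a unit vector with ‖Aᵀq‖_∞² ≥ C⋆ that satisfies grad f(q) = 0 and vᵀ Hess f(q) v ≥ 0 for all v ∈ ℝ^p. Then q = a_i or q = −a_i for some column a_i of A. -/
open Matrix MeasureTheory ProbabilityTheory Real
open scoped BigOperators ENNReal

noncomputable section

theorem stmt3 (p r : ℕ) (hr : 1 ≤ r) (hrp : r ≤ p)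
    (A : Matrix (Fin p) (Fin r) ℝ) (hA : Aᵀ * A = 1)
    (θ Cstar : ℝ) (hθ0 : 0 < θ) (hθ : θ < 1)
    (hC : (1/2) * Real.sqrt (θ / (1 - θ)) < Cstar)
    (q : Fin p → ℝ) (hq : l2sq q = 1) (hinf : Cstar ≤ linfSq (zeta A q))
    (hgrad : gradf θ A q = 0)
    (hhess : ∀ v : Fin p → ℝ, 0 ≤ qform (hessf θ A q) v) :
    ∃ i : Fin r, q = (fun k => A k i) ∨ q = (fun k => -A k i) := by
  classical
  have hr' : Nonempty (Fin r) := ⟨⟨0, hr⟩⟩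
  have h1θ : 0 < 1 - θ := by linarith
  -- generic helpers
  have hATA : ∀ w : Fin r → ℝ, Aᵀ *ᵥ (A *ᵥ w) = w := fun w => by
    rw [Matrix.mulVec_mulVec, hA, Matrix.one_mulVec]
  have hdotA : ∀ (x : Fin p → ℝ) (w : Fin r → ℝ), x ⬝ᵥ (A *ᵥ w) = (Aᵀ *ᵥ x) ⬝ᵥ w := by
    intro x w; rw [Matrix.dotProduct_mulVec, Matrix.mulVec_transpose]
  have hvm : ∀ x : Fin p → ℝ, Matrix.vecMulVec q q *ᵥ x = (q ⬝ᵥ x) • q := by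
    intro x; funext k
    simp only [Matrix.mulVec, Matrix.vecMulVec_apply, dotProduct, Pi.smul_apply,
      smul_eq_mul]
    rw [Finset.sum_mul]
    exact Finset.sum_congr rfl fun j _ => by ring
  have hproj : ∀ x : Fin p → ℝ, proj q *ᵥ x = x - (q ⬝ᵥ x) • q := by
    intro x; rw [proj, Matrix.sub_mulVec, Matrix.one_mulVec, hvm]
  have hl2 : ∀ {m : ℕ} (v : Fin m → ℝ), l2sq v = v ⬝ᵥ v := by
    intro m v; simp [l2sq, dotProduct, pow_two]
  have hqAz0 : Aᵀ *ᵥ q = zeta A q := rfl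
  -- ζ ≠ 0
  have hC0 : 0 < Cstar := lt_of_le_of_lt (by positivity) hC
  have hζne : ∃ i, zeta A q i ≠ 0 := by
    by_contra h
    push_neg at h
    have hz : linfSq (zeta A q) = 0 := by
      simp [linfSq, h]
    rw [hz] at hinf; linarith
  obtain ⟨i₀, hi₀⟩ := hζne
  have hTpos : 0 < l4p4 (zeta A q) := by
    have h2 : 0 < zeta A q i₀ ^ 2 := pow_two_pos_of_ne_zero hi₀
    have h4 : 0 < zeta A q i₀ ^ 4 := by nlinarith
    have hle : zeta A q i₀ ^ 4 ≤ ∑ j, zeta A q j ^ 4 :=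
      Finset.single_le_sum (f := fun j => zeta A q j ^ 4)
        (fun j _ => by positivity) (Finset.mem_univ i₀)
    rw [l4p4]; linarith
  -- gradient condition
  set lam : ℝ := (1 - θ) * l4p4 (zeta A q) + θ * (l2sq (zeta A q)) ^ 2 with hlamdef
  have hG0 : proj q *ᵥ ((1 - θ) • (A *ᵥ fun j => (zeta A q j) ^ 3)
      + (θ * l2sq (zeta A q)) • (A *ᵥ zeta A q)) = 0 := by
    have h := hgrad
    rw [gradf, neg_eq_zero] at h
    exact h
  have hqG : q ⬝ᵥ ((1 - θ) • (A *ᵥ fun j => (zeta A q j) ^ 3)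
      + (θ * l2sq (zeta A q)) • (A *ᵥ zeta A q)) = lam := by
    rw [dotProduct_add, dotProduct_smul, dotProduct_smul,
      hdotA, hdotA, hqAz0]
    have h1 : zeta A q ⬝ᵥ (fun j => zeta A q j ^ 3) = l4p4 (zeta A q) := by
      rw [dotProduct, l4p4]
      exact Finset.sum_congr rfl fun j _ => by ring
    have h2 : zeta A q ⬝ᵥ zeta A q = l2sq (zeta A q) := (hl2 _).symm
    rw [h1, h2, hlamdef]; simp only [smul_eq_mul]; ring
  have hGlam : (1 - θ) • (A *ᵥ fun j => (zeta A q j) ^ 3)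
      + (θ * l2sq (zeta A q)) • (A *ᵥ zeta A q) = lam • q := by
    have h := hG0
    rw [hproj, hqG, sub_eq_zero] at h
    exact h
  have hlampos : 0 < lam := by
    have : 0 ≤ θ * (l2sq (zeta A q)) ^ 2 := by positivity
    nlinarith
  -- componentwise equation
  have hcomp : ∀ i, (1 - θ) * (zeta A q i) ^ 3 + (θ * l2sq (zeta A q)) * zeta A q i
      = lam * zeta A q i := by
    intro i
    have h := congrArg (fun x => (Aᵀ *ᵥ x) i) hGlam
    simpa [Matrix.mulVec_add, Matrix.mulVec_smul, hATA, hqAz0] using h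
  -- q = A ζ
  have hvec : ((1 - θ) • (fun j => (zeta A q j) ^ 3) + (θ * l2sq (zeta A q)) • zeta A q)
      = lam • zeta A q := by
    funext i
    simpa using hcomp i
  have hqAz : q = A *ᵥ zeta A q := by
    have h1 : (1 - θ) • (A *ᵥ fun j => (zeta A q j) ^ 3)
        + (θ * l2sq (zeta A q)) • (A *ᵥ zeta A q)
        = A *ᵥ ((1 - θ) • (fun j => (zeta A q j) ^ 3) + (θ * l2sq (zeta A q)) • zeta A q) := by
      rw [Matrix.mulVec_add, Matrix.mulVec_smul, Matrix.mulVec_smul]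
    rw [h1, hvec, Matrix.mulVec_smul] at hGlam
    have := smul_right_injective (Fin p → ℝ) (ne_of_gt hlampos) hGlam.symm
    exact this
  -- S = 1
  have hS1 : l2sq (zeta A q) = 1 := by
    have h1 : q ⬝ᵥ q = 1 := by rw [← hl2]; exact hq
    have h2 : q ⬝ᵥ (A *ᵥ zeta A q) = l2sq (zeta A q) := by
      rw [hdotA, hqAz0, ← hl2]
    rw [← hqAz] at h2
    linarith
  have hlamval : lam = (1 - θ) * l4p4 (zeta A q) + θ := by
    rw [hlamdef, hS1]; ring
  -- nonzero entries have square T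
  have hTi : ∀ i, zeta A q i ≠ 0 → (zeta A q i) ^ 2 = l4p4 (zeta A q) := by
    intro i hi
    have h := hcomp i
    rw [hS1, hlamval] at h
    have h2 : (1 - θ) * (zeta A q i * ((zeta A q i) ^ 2 - l4p4 (zeta A q))) = 0 := by
      nlinarith [h]
    rcases mul_eq_zero.mp h2 with h3 | h3
    · exact absurd h3 (ne_of_gt h1θ)
    · rcases mul_eq_zero.mp h3 with h4 | h4
      · exact absurd h4 hi
      · linarith
  -- uniqueness of nonzero coordinate
  have huniq : ∀ j, j ≠ i₀ → zeta A q j = 0 := by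
    intro j hj
    by_contra hjne
    -- build test vector
    set T : ℝ := l4p4 (zeta A q) with hTdef
    set u : Fin r → ℝ := Pi.single i₀ (zeta A q j) + Pi.single j (-(zeta A q i₀)) with hudef
    have hud : ∀ w : Fin r → ℝ, u ⬝ᵥ w = zeta A q j * w i₀ - zeta A q i₀ * w j := by
      intro w
      rw [hudef, add_dotProduct, single_dotProduct, single_dotProduct]
      ring
    have hui : u i₀ = zeta A q j := by
      rw [hudef]; simp [Pi.single_eq_of_ne (Ne.symm hj)]
    have huj : u j = -(zeta A q i₀) := by
      rw [hudef]; simp [Pi.single_eq_of_ne hj]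
    set v : Fin p → ℝ := A *ᵥ u with hvdef
    have hAv : Aᵀ *ᵥ v = u := hATA u
    have hζu : u ⬝ᵥ zeta A q = 0 := by rw [hud]; ring
    have hqv : q ⬝ᵥ v = 0 := by
      rw [hvdef, hdotA, hqAz0, dotProduct_comm]; exact hζu
    have hPv : proj q *ᵥ v = v := by rw [hproj, hqv]; simp
    have hPBP : ∀ B : Matrix (Fin p) (Fin p) ℝ,
        v ⬝ᵥ ((proj q * B * proj q) *ᵥ v) = v ⬝ᵥ (B *ᵥ v) := by
      intro B
      rw [← Matrix.mulVec_mulVec, hPv, ← Matrix.mulVec_mulVec, hproj,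
        dotProduct_sub, dotProduct_smul, dotProduct_comm v q, hqv]
      simp
    -- key scalar values
    have hT1 : (zeta A q i₀) ^ 2 = T := hTi i₀ hi₀
    have hT2 : (zeta A q j) ^ 2 = T := hTi j hjne
    have huu : u ⬝ᵥ u = 2 * T := by
      rw [hud, hui, huj]; linear_combination hT1 + hT2
    have hvv : v ⬝ᵥ v = 2 * T := by
      rw [hvdef, hdotA, hAv]; exact huu
    have hDu : u ⬝ᵥ (Matrix.diagonal (fun k => (zeta A q k) ^ 2) *ᵥ u) = 2 * T ^ 2 := by
      have hD : ∀ k, (Matrix.diagonal (fun k => (zeta A q k) ^ 2) *ᵥ u) k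
          = (zeta A q k) ^ 2 * u k := by
        intro k; simp [Matrix.mulVec_diagonal]
      rw [hud, hD, hD, hui, huj]; linear_combination (2 * (zeta A q j) ^ 2) * hT1 + (2 * T) * hT2
    -- first block
    have hX1 : v ⬝ᵥ ((proj q *
        ((3 : ℝ) • (A * Matrix.diagonal (fun k => (zeta A q k) ^ 2) * Aᵀ)
          - l4p4 (zeta A q) • (1 : Matrix (Fin p) (Fin p) ℝ)) * proj q) *ᵥ v)
        = 4 * T ^ 2 := by
      rw [hPBP, Matrix.sub_mulVec, Matrix.smul_mulVec, Matrix.smul_mulVec,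
        dotProduct_sub, dotProduct_smul, dotProduct_smul,
        Matrix.one_mulVec, hvv]
      have h1 : v ⬝ᵥ ((A * Matrix.diagonal (fun k => (zeta A q k) ^ 2) * Aᵀ) *ᵥ v)
          = 2 * T ^ 2 := by
        rw [← Matrix.mulVec_mulVec, ← Matrix.mulVec_mulVec, hAv, hdotA, hAv]
        exact hDu
      rw [h1, ← hTdef]
      simp only [smul_eq_mul]; ring
    -- second block
    have hX2 : v ⬝ᵥ ((proj q *
        (l2sq (zeta A q) • (A * Aᵀ)
          + (2 : ℝ) • (A * Aᵀ * Matrix.vecMulVec q q * (A * Aᵀ))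
          - (l2sq (zeta A q)) ^ 2 • (1 : Matrix (Fin p) (Fin p) ℝ)) * proj q) *ᵥ v)
        = 0 := by
      rw [hPBP, Matrix.sub_mulVec, Matrix.add_mulVec, Matrix.smul_mulVec,
        Matrix.smul_mulVec, Matrix.smul_mulVec,
        dotProduct_sub, dotProduct_add,
        dotProduct_smul, dotProduct_smul, dotProduct_smul,
        Matrix.one_mulVec, hvv]
      have h1 : (A * Aᵀ) *ᵥ v = v := by
        rw [← Matrix.mulVec_mulVec, hAv, hvdef]
      have h2 : v ⬝ᵥ ((A * Aᵀ * Matrix.vecMulVec q q * (A * Aᵀ)) *ᵥ v) = 0 := by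
        rw [← Matrix.mulVec_mulVec, h1, ← Matrix.mulVec_mulVec, hvm, hqv]
        simp
      rw [h1, hvv, h2, hS1]
      simp only [smul_eq_mul]; ring
    -- Hessian value
    have hneg : qform (hessf θ A q) v = -(4 * (1 - θ) * T ^ 2) := by
      rw [qform, hessf, Matrix.sub_mulVec, Matrix.neg_mulVec, Matrix.smul_mulVec,
        Matrix.smul_mulVec, dotProduct_sub, dotProduct_neg,
        dotProduct_smul, dotProduct_smul, hX1, hX2]
      simp only [smul_eq_mul]; ring
    have h0 := hhess v
    rw [hneg] at h0
    have hT0 : 0 < T := hTpos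
    have hpos : 0 < 4 * (1 - θ) * T ^ 2 :=
      mul_pos (mul_pos (by norm_num) h1θ) (pow_pos hT0 2)
    linarith
  -- conclude
  have hsum : l2sq (zeta A q) = (zeta A q i₀) ^ 2 := by
    rw [l2sq]
    rw [Finset.sum_eq_single i₀]
    · intro b _ hb; rw [huniq b hb]; ring
    · intro h; exact absurd (Finset.mem_univ i₀) h
  have hsq1 : (zeta A q i₀) ^ 2 = 1 := by rw [← hsum]; exact hS1
  have hqk : ∀ k, q k = A k i₀ * zeta A q i₀ := by
    intro k
    have h := congrFun hqAz k
    rw [h, Matrix.mulVec, dotProduct]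
    rw [Finset.sum_eq_single i₀]
    · intro b _ hb; rw [huniq b hb]; ring
    · intro h; exact absurd (Finset.mem_univ i₀) h
  have hcases : zeta A q i₀ = 1 ∨ zeta A q i₀ = -1 := by
    have : (zeta A q i₀ - 1) * (zeta A q i₀ + 1) = 0 := by nlinarith
    rcases mul_eq_zero.mp this with h | h
    · left; linarith
    · right; linarith
  refine ⟨i₀, ?_⟩
  rcases hcases with h | h
  · left; funext k; rw [hqk k, h]; ring
  · right; funext k; rw [hqk k, h]; ring

end
end

section
/- Assume 0 < θ < 1/3 and let C⋆ ≤ (1−3θ)/2. For every unit vector q ∈ ℝ^p with 0 < ‖Aᵀq‖_∞² < C⋆ there exists v ∈ ℝ^p with vᵀ Hess f(q) v < 0. In particular, if θ ≤ 1/6 and 0 < ‖Aᵀq‖_∞² < C⋆ ≤ 1/(3√2), then there exists a unit vector v with vᵀ Hess f(q) v < −((11−5√2)/9)·‖Aᵀq‖_∞². -/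
open Matrix MeasureTheory ProbabilityTheory Real
open scoped BigOperators ENNReal

noncomputable section

lemma aux_part2' (θ c Q : ℝ) (hc0 : 0 < c) (hc12 : c < 1/2) (hθ6 : θ ≤ 1/6)
    (hcr : c < 1/(3*Real.sqrt 2))
    (hQle : Q ≤ -((1-θ) * (2*c*(1-c)*(1-2*c)))) :
    (1-c)⁻¹ * Q < -((11 - 5*Real.sqrt 2)/9) * c := by
  set r2 : ℝ := Real.sqrt 2 with hr2def
  have hr2 : r2^2 = 2 := Real.sq_sqrt (by norm_num)
  have hr2pos : 0 < r2 := Real.sqrt_pos.2 (by norm_num)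
  have hr2lt : r2 < 3/2 := by nlinarith
  have h1c : (0:ℝ) < 1 - c := by linarith
  have h3rc : 3*r2*c < 1 := by rw [lt_div_iff₀ (by positivity)] at hcr; linarith
  have h6c : 6*c < r2 := by nlinarith [mul_lt_mul_of_pos_left h3rc hr2pos]
  have hkey : (11 - 5*r2)/9 < 2*(1-θ)*(1-2*c) := by
    have ha : (5:ℝ)/6 ≤ 1-θ := by linarith
    have hb2 : 1 - r2/3 ≤ 1-2*c := by linarith
    have hbpos : (0:ℝ) ≤ 1 - r2/3 := by linarith
    have := mul_le_mul ha hb2 hbpos (by linarith)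
    nlinarith
  rw [show (1-c)⁻¹ * Q = Q / (1-c) from by ring, div_lt_iff₀ h1c]
  have hfin : -((1-θ) * (2*c*(1-c)*(1-2*c))) < -((11 - 5*r2)/9) * c * (1-c) := by
    have h2 : 0 < c * (1-c) := mul_pos hc0 h1c
    nlinarith [mul_lt_mul_of_pos_right hkey h2]
  linarith [hQle, hfin]

set_option maxHeartbeats 1600000 in
theorem stmt4 (p r : ℕ) (hr : 1 ≤ r) (hrp : r ≤ p)
    (A : Matrix (Fin p) (Fin r) ℝ) (hA : Aᵀ * A = 1)
    (θ Cstar : ℝ) (hθ0 : 0 < θ) (hθ : θ < 1/3) (hC : Cstar ≤ (1 - 3*θ)/2)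
    (q : Fin p → ℝ) (hq : l2sq q = 1)
    (h0 : 0 < linfSq (zeta A q)) (h1 : linfSq (zeta A q) < Cstar) :
    (∃ v : Fin p → ℝ, qform (hessf θ A q) v < 0) ∧
    (θ ≤ 1/6 → Cstar ≤ 1/(3*Real.sqrt 2) →
      ∃ v : Fin p → ℝ, l2sq v = 1 ∧
        qform (hessf θ A q) v < -((11 - 5*Real.sqrt 2)/9) * linfSq (zeta A q)) := by
  classical
  have hne : Nonempty (Fin r) := ⟨⟨0, hr⟩⟩
  set ζ : Fin r → ℝ := zeta A q with hζdef
  obtain ⟨i, hi⟩ : ∃ i, ∀ j, ζ j ^ 2 ≤ ζ i ^ 2 := Finite.exists_max (fun j => ζ j ^ 2)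
  have hsup : linfSq ζ = ζ i ^ 2 := by
    rw [linfSq]
    exact le_antisymm (ciSup_le hi)
      (le_ciSup (Set.Finite.bddAbove (Set.finite_range (fun j => ζ j ^ 2))) i)
  set c : ℝ := ζ i ^ 2 with hcdef
  set t : ℝ := l2sq ζ with htdef
  set b : ℝ := l4p4 ζ with hbdef
  have hc0 : 0 < c := hsup ▸ h0
  have hcC : c < Cstar := hsup ▸ h1
  have hchalf : c < (1 - 3*θ)/2 := lt_of_lt_of_le hcC hC
  have hc12 : c < 1/2 := by linarith
  -- ζ as mulVec
  have hζmv : Aᵀ *ᵥ q = ζ := rfl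
  have hAAt : ∀ x : Fin r → ℝ, Aᵀ *ᵥ (A *ᵥ x) = x := by
    intro x; rw [Matrix.mulVec_mulVec, hA, Matrix.one_mulVec]
  have hdotA : ∀ (v : Fin p → ℝ) (x : Fin r → ℝ), v ⬝ᵥ (A *ᵥ x) = (Aᵀ *ᵥ v) ⬝ᵥ x := by
    intro v x; rw [Matrix.dotProduct_mulVec, ← Matrix.mulVec_transpose]
  have hl2 : ∀ {m : ℕ} (v : Fin m → ℝ), l2sq v = v ⬝ᵥ v := by
    intro m v; simp only [l2sq, dotProduct, sq]
  -- scalar facts about ζ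
  have hζζ : ζ ⬝ᵥ ζ = t := by rw [← hl2]
  have ht1 : t ≤ 1 := by
    have e1 : q ⬝ᵥ (A *ᵥ ζ) = t := by rw [hdotA, hζmv, hζζ]
    have e2 : (A *ᵥ ζ) ⬝ᵥ (A *ᵥ ζ) = t := by rw [hdotA, hAAt, hζζ]
    have e3 : (A *ᵥ ζ) ⬝ᵥ q = t := by rw [dotProduct_comm]; exact e1
    have e4 : q ⬝ᵥ q = 1 := by rw [← hl2]; exact hq
    have h5 : (0:ℝ) ≤ (fun k => q k - (A *ᵥ ζ) k) ⬝ᵥ (fun k => q k - (A *ᵥ ζ) k) := by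
      simp only [dotProduct]
      exact Finset.sum_nonneg fun k _ => mul_self_nonneg _
    have h6 : (fun k => q k - (A *ᵥ ζ) k) ⬝ᵥ (fun k => q k - (A *ᵥ ζ) k)
        = q ⬝ᵥ q - q ⬝ᵥ (A *ᵥ ζ) - ((A *ᵥ ζ) ⬝ᵥ q - (A *ᵥ ζ) ⬝ᵥ (A *ᵥ ζ)) := by
      simp only [dotProduct, Finset.mul_sum]
      rw [← Finset.sum_sub_distrib, ← Finset.sum_sub_distrib, ← Finset.sum_sub_distrib]
      exact Finset.sum_congr rfl fun k _ => by ring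
    rw [h6, e1, e2, e3, e4] at h5
    linarith
  have hζsq : ∀ j, ζ j ^ 2 ≤ c := hi
  have hct : c ≤ t := by
    rw [htdef, l2sq]
    exact Finset.single_le_sum (fun j _ => sq_nonneg (ζ j)) (Finset.mem_univ i)
  have hbc : c ^ 2 ≤ b := by
    have : ζ i ^ 4 ≤ b := by
      rw [hbdef, l4p4]
      exact Finset.single_le_sum (f := fun j => ζ j ^ 4)
        (fun j _ => by positivity) (Finset.mem_univ i)
    rw [hcdef]; nlinarith [this]
  have hbct : b ≤ c * t := by
    rw [hbdef, htdef, l4p4, l2sq, Finset.mul_sum]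
    refine Finset.sum_le_sum fun j _ => ?_
    have h1 := hζsq j
    nlinarith [sq_nonneg (ζ j)]
  have hbcc : b ≤ c := le_trans hbct (by nlinarith)
  -- the direction w
  set w : Fin p → ℝ := fun k => A k i - ζ i * q k with hwdef
  set u : Fin r → ℝ := fun j => (if j = i then (1:ℝ) else 0) - ζ i * ζ j with hudef
  have hζi : ∀ j, (∑ k, A k j * q k) = ζ j := fun j => rfl
  have hcol : ∀ j, (∑ k, A k j * A k i) = if j = i then (1:ℝ) else 0 := by
    intro j
    have : (Aᵀ * A) j i = (1 : Matrix (Fin r) (Fin r) ℝ) j i := by rw [hA]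
    simpa [Matrix.mul_apply, Matrix.transpose_apply, Matrix.one_apply] using this
  have hqs : (∑ k, q k * q k) = 1 := by
    rw [← hq, l2sq]; exact Finset.sum_congr rfl fun k _ => (sq (q k)).symm ▸ by ring
  have hqw : q ⬝ᵥ w = 0 := by
    simp only [dotProduct, hwdef]
    have : ∀ k, q k * (A k i - ζ i * q k) = A k i * q k - ζ i * (q k * q k) := fun k => by ring
    rw [Finset.sum_congr rfl fun k _ => this k, Finset.sum_sub_distrib, ← Finset.mul_sum,
      hζi i, hqs]
    ring
  have hu : Aᵀ *ᵥ w = u := by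
    funext j
    simp only [Matrix.mulVec, dotProduct, Matrix.transpose_apply, hwdef, hudef]
    have : ∀ k, A k j * (A k i - ζ i * q k) = A k j * A k i - ζ i * (A k j * q k) :=
      fun k => by ring
    rw [Finset.sum_congr rfl fun k _ => this k, Finset.sum_sub_distrib, ← Finset.mul_sum,
      hcol j, hζi j]
  have hww : w ⬝ᵥ w = 1 - c := by
    simp only [dotProduct, hwdef]
    have : ∀ k, (A k i - ζ i * q k) * (A k i - ζ i * q k)
        = (A k i * A k i - 2 * ζ i * (A k i * q k)) + ζ i ^ 2 * (q k * q k) := fun k => by ring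
    rw [Finset.sum_congr rfl fun k _ => this k, Finset.sum_add_distrib,
      Finset.sum_sub_distrib, ← Finset.mul_sum, ← Finset.mul_sum, hcol i, hζi i, hqs]
    rw [hcdef]
    simp
    ring
  -- projection absorption
  have hV : ∀ y : Fin p → ℝ, Matrix.vecMulVec q q *ᵥ y = (q ⬝ᵥ y) • q := by
    intro y; funext k
    simp only [Matrix.mulVec, dotProduct, Matrix.vecMulVec_apply, Pi.smul_apply, smul_eq_mul]
    rw [Finset.sum_mul]
    exact Finset.sum_congr rfl fun j _ => by ring
  have hPv : ∀ y : Fin p → ℝ, proj q *ᵥ y = y - (q ⬝ᵥ y) • q := by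
    intro y
    rw [proj, Matrix.sub_mulVec, Matrix.one_mulVec, hV]
  have hPw : proj q *ᵥ w = w := by rw [hPv, hqw]; simp
  have hwq : w ⬝ᵥ q = 0 := by rw [dotProduct_comm]; exact hqw
  have hdotP : ∀ y : Fin p → ℝ, w ⬝ᵥ (proj q *ᵥ y) = w ⬝ᵥ y := by
    intro y
    rw [hPv, dotProduct_sub, dotProduct_smul, hwq]
    simp
  have hproj : ∀ X : Matrix (Fin p) (Fin p) ℝ,
      w ⬝ᵥ ((proj q * X * proj q) *ᵥ w) = w ⬝ᵥ (X *ᵥ w) := by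
    intro X
    rw [← Matrix.mulVec_mulVec, ← Matrix.mulVec_mulVec, hPw, hdotP]
  -- scalar sums
  have huζ : ζ ⬝ᵥ u = ζ i * (1 - t) := by
    simp only [dotProduct, hudef]
    have : ∀ j, ζ j * ((if j = i then (1:ℝ) else 0) - ζ i * ζ j)
        = (if j = i then ζ j else 0) - ζ i * ζ j ^ 2 := by
      intro j; split <;> ring
    rw [Finset.sum_congr rfl fun j _ => this j, Finset.sum_sub_distrib, ← Finset.mul_sum,
      Finset.sum_ite_eq' Finset.univ i fun j => ζ j]
    simp only [Finset.mem_univ, if_pos]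
    rw [htdef, l2sq]; ring
  have huu : u ⬝ᵥ u = 1 - 2*c + c*t := by
    simp only [dotProduct, hudef]
    have : ∀ j, ((if j = i then (1:ℝ) else 0) - ζ i * ζ j)
          * ((if j = i then (1:ℝ) else 0) - ζ i * ζ j)
        = (if j = i then (1 - 2*(ζ i * ζ j)) else 0) + ζ i ^ 2 * ζ j ^ 2 := by
      intro j; split <;> ring
    rw [Finset.sum_congr rfl fun j _ => this j, Finset.sum_add_distrib,
      Finset.sum_ite_eq' Finset.univ i fun j => (1 - 2*(ζ i * ζ j)), ← Finset.mul_sum]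
    simp only [Finset.mem_univ, if_pos]
    rw [htdef, l2sq, hcdef]
    ring
  have hdiag : u ⬝ᵥ ((Matrix.diagonal fun j => ζ j ^ 2) *ᵥ u) = c - 2*c^2 + c*b := by
    simp only [dotProduct, Matrix.mulVec_diagonal]
    have : ∀ j, u j * (ζ j ^ 2 * u j)
        = (if j = i then (ζ j ^ 2 - 2*(ζ i * ζ j ^ 3)) else 0) + ζ i ^ 2 * ζ j ^ 4 := by
      intro j; simp only [hudef]; split <;> ring
    rw [Finset.sum_congr rfl fun j _ => this j, Finset.sum_add_distrib,
      Finset.sum_ite_eq' Finset.univ i fun j => (ζ j ^ 2 - 2*(ζ i * ζ j ^ 3)), ← Finset.mul_sum]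
    simp only [Finset.mem_univ, if_pos]
    rw [hbdef, l4p4, hcdef]
    ring
  -- the three matrix pieces
  have hADA : w ⬝ᵥ ((A * Matrix.diagonal (fun j => ζ j ^ 2) * Aᵀ) *ᵥ w) = c - 2*c^2 + c*b := by
    rw [← Matrix.mulVec_mulVec, ← Matrix.mulVec_mulVec, hu, hdotA, hu, hdiag]
  have hAAw : w ⬝ᵥ ((A * Aᵀ) *ᵥ w) = 1 - 2*c + c*t := by
    rw [← Matrix.mulVec_mulVec, hu, hdotA, hu, huu]
  have hmid : w ⬝ᵥ ((A * Aᵀ * Matrix.vecMulVec q q * (A * Aᵀ)) *ᵥ w) = (ζ i * (1 - t))^2 := by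
    have e1 : (A * Aᵀ) *ᵥ w = A *ᵥ u := by rw [← Matrix.mulVec_mulVec, hu]
    have e2 : q ⬝ᵥ (A *ᵥ u) = ζ i * (1 - t) := by rw [hdotA, hζmv, huζ]
    rw [← Matrix.mulVec_mulVec, e1, ← Matrix.mulVec_mulVec, hV, e2, ← Matrix.mulVec_mulVec,
      Matrix.mulVec_smul, hζmv]
    rw [Matrix.mulVec_smul, dotProduct_smul, smul_eq_mul, hdotA, hu, dotProduct_comm, huζ]
    ring
  -- the quadratic form at w
  have hQ : qform (hessf θ A q) w
      = -((1-θ) * (3*(c - 2*c^2 + c*b) - b*(1-c)))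
        - θ * (t*(1 - 2*c + c*t) + 2*(ζ i * (1-t))^2 - t^2*(1-c)) := by
    simp only [qform, hessf, ← hζdef, ← htdef, ← hbdef]
    rw [Matrix.sub_mulVec, Matrix.neg_mulVec, Matrix.smul_mulVec,
      Matrix.smul_mulVec, dotProduct_sub, dotProduct_neg, dotProduct_smul,
      dotProduct_smul, hproj, hproj]
    rw [Matrix.sub_mulVec, Matrix.smul_mulVec, Matrix.smul_mulVec,
      Matrix.one_mulVec, dotProduct_sub, dotProduct_smul, dotProduct_smul, hADA, hww]
    rw [Matrix.sub_mulVec, Matrix.add_mulVec, Matrix.smul_mulVec,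
      Matrix.smul_mulVec, Matrix.smul_mulVec, Matrix.one_mulVec,
      dotProduct_sub, dotProduct_add, dotProduct_smul, dotProduct_smul, dotProduct_smul,
      hAAw, hmid, hww]
    simp only [smul_eq_mul]
    try ring
  -- key inequality
  have hθpart : 0 ≤ t*(1 - 2*c + c*t) + 2*(ζ i * (1-t))^2 - t^2*(1-c) := by
    have e : t*(1 - 2*c + c*t) + 2*(ζ i * (1-t))^2 - t^2*(1-c)
        = (1-t)*(t*(1-2*c) + 2*c*(1-t)) + 2*((ζ i * (1-t))^2 - c*(1-t)^2) := by
      rw [hcdef]; ring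
    have e2 : (ζ i * (1-t))^2 - c*(1-t)^2 = 0 := by rw [hcdef]; ring
    rw [e, e2]
    have h1 : 0 ≤ 1 - t := by linarith
    have h2 : 0 ≤ t*(1-2*c) + 2*c*(1-t) := by nlinarith
    nlinarith
  have hQle : qform (hessf θ A q) w ≤ -((1-θ) * (2*c*(1-c)*(1-2*c))) := by
    rw [hQ]
    have hpart : 2*c*(1-c)*(1-2*c) ≤ 3*(c - 2*c^2 + c*b) - b*(1-c) := by
      nlinarith [hbc, hbcc, hc0]
    have h1θ : 0 < 1 - θ := by linarith
    nlinarith [mul_le_mul_of_nonneg_left hpart h1θ.le, mul_nonneg hθ0.le hθpart]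
  have hQneg : qform (hessf θ A q) w < 0 := by
    have h1 : 0 < 2*c*(1-c)*(1-2*c) :=
      mul_pos (mul_pos (by linarith : (0:ℝ) < 2*c) (by linarith : (0:ℝ) < 1-c))
        (by linarith : (0:ℝ) < 1-2*c)
    nlinarith [hQle, h1, mul_pos (by linarith : (0:ℝ) < 1-θ) h1]
  refine ⟨⟨w, hQneg⟩, fun hθ6 hC2 => ?_⟩
  -- part 2
  have h1c : (0:ℝ) < 1 - c := by linarith
  set s : ℝ := Real.sqrt (1-c) with hsdef
  have hs2 : s^2 = 1 - c := Real.sq_sqrt h1c.le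
  have hspos : 0 < s := Real.sqrt_pos.2 h1c
  refine ⟨s⁻¹ • w, ?_, ?_⟩
  · rw [hl2, smul_dotProduct, dotProduct_smul, hww, smul_eq_mul, smul_eq_mul, ← hs2]
    field_simp
  · have hqsc : qform (hessf θ A q) (s⁻¹ • w) = s⁻¹ * (s⁻¹ * qform (hessf θ A q) w) := by
      simp only [qform, Matrix.mulVec_smul, smul_dotProduct, dotProduct_smul, smul_eq_mul]
    rw [hqsc, hsup]
    have hinv : s⁻¹ * s⁻¹ = (1-c)⁻¹ := by rw [← mul_inv, ← hs2, sq]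
    rw [← mul_assoc, hinv]
    exact aux_part2' θ c _ hc0 hc12 hθ6 (lt_of_lt_of_le hcC hC2) hQle

end
end

section
/- Assume 0 < θ < 1 and C⋆ > 0. For every unit vector q ∈ ℝ^p with ‖Aᵀq‖_∞² ≥ C⋆, writing ζ = Aᵀq, one has ‖ζ‖₄⁴·(1 − θ/(4(1−θ)C⋆²)) ≤ α(q) ≤ ‖ζ‖₄⁴. Consequently, if C⋆² > θ/(4(1−θ)) then α(q) > 0. -/
open Matrix MeasureTheory ProbabilityTheory Real
open scoped BigOperators ENNReal

noncomputable section

set_option maxHeartbeats 2000000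

theorem stmt5 (p r : ℕ) (hr : 1 ≤ r) (hrp : r ≤ p)
    (A : Matrix (Fin p) (Fin r) ℝ) (hA : Aᵀ * A = 1)
    (θ Cstar : ℝ) (hθ0 : 0 < θ) (hθ : θ < 1) (hC : 0 < Cstar)
    (q : Fin p → ℝ) (hq : l2sq q = 1) (hinf : Cstar ≤ linfSq (zeta A q)) :
    l4p4 (zeta A q) * (1 - θ/(4*(1-θ)*Cstar^2)) ≤ alphaf θ A q ∧
    alphaf θ A q ≤ l4p4 (zeta A q) ∧
    (θ/(4*(1-θ)) < Cstar^2 → 0 < alphaf θ A q) := by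
  have h1θ : 0 < 1 - θ := by linarith
  set ζ := zeta A q with hζdef
  set s := l2sq ζ with hsdef
  set L := l4p4 ζ with hLdef
  have hs0 : 0 ≤ s := Finset.sum_nonneg fun i _ => sq_nonneg _
  -- s ≤ 1 via Cauchy-Schwarz and projection identities
  have hdot : s = ζ ⬝ᵥ ζ := by
    simp [hsdef, l2sq, dotProduct, sq]
  have huu : (A *ᵥ ζ) ⬝ᵥ (A *ᵥ ζ) = s := by
    rw [hdot, hζdef]
    show (A *ᵥ (Aᵀ *ᵥ q)) ⬝ᵥ (A *ᵥ (Aᵀ *ᵥ q)) = (Aᵀ *ᵥ q) ⬝ᵥ (Aᵀ *ᵥ q)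
    rw [Matrix.dotProduct_mulVec, ← Matrix.mulVec_transpose, Matrix.mulVec_mulVec, hA,
      Matrix.one_mulVec]
  have hqu : q ⬝ᵥ (A *ᵥ ζ) = s := by
    rw [hdot, hζdef]
    show q ⬝ᵥ (A *ᵥ (Aᵀ *ᵥ q)) = (Aᵀ *ᵥ q) ⬝ᵥ (Aᵀ *ᵥ q)
    rw [Matrix.dotProduct_mulVec, ← Matrix.mulVec_transpose]
  have hCS : (q ⬝ᵥ (A *ᵥ ζ)) ^ 2 ≤ (∑ i, q i ^ 2) * ∑ i, (A *ᵥ ζ) i ^ 2 := by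
    simpa [dotProduct] using Finset.sum_mul_sq_le_sq_mul_sq Finset.univ q (A *ᵥ ζ)
  have hsum2 : (∑ i, (A *ᵥ ζ) i ^ 2) = s := by
    rw [← huu]; simp [dotProduct, sq]
  have hs2 : s ^ 2 ≤ s := by
    have hq1 : (∑ i, q i ^ 2) = 1 := hq
    rw [hqu, hq1, hsum2, one_mul] at hCS
    exact hCS
  have hs1 : s ≤ 1 := by nlinarith
  -- L ≥ Cstar ^ 2
  have : Nonempty (Fin r) := ⟨⟨0, hr⟩⟩
  obtain ⟨j, hj⟩ := exists_eq_ciSup_of_finite (f := fun i => (ζ i) ^ 2)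
  have hjC : Cstar ≤ ζ j ^ 2 := by
    rw [hj]; exact hinf
  have hLC : Cstar ^ 2 ≤ L := by
    have h4 : Cstar ^ 2 ≤ ζ j ^ 4 := by nlinarith
    have hle : ζ j ^ 4 ≤ L := by
      rw [hLdef, l4p4]
      exact Finset.single_le_sum (f := fun i => ζ i ^ 4) (fun i _ => by positivity)
        (Finset.mem_univ j)
    linarith
  have hL0 : 0 < L := lt_of_lt_of_le (by positivity) hLC
  have halpha : alphaf θ A q = L + (θ / (1 - θ)) * (s ^ 2 - s) := rfl
  clear_value L s ζ
  have hden : 0 < 4 * (1 - θ) * Cstar ^ 2 :=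
    mul_pos (mul_pos (by norm_num) h1θ) (pow_pos hC 2)
  have hc : 0 ≤ θ / (1 - θ) := div_nonneg hθ0.le h1θ.le
  -- key inequality for the lower bound
  have key : (θ / (1 - θ)) * (s - s ^ 2) ≤ L * (θ / (4 * (1 - θ) * Cstar ^ 2)) := by
    rw [div_mul_eq_mul_div, mul_div_assoc', div_le_div_iff₀ h1θ hden]
    nlinarith [mul_nonneg (mul_nonneg (mul_nonneg hθ0.le h1θ.le) (sq_nonneg Cstar))
        (sq_nonneg (2 * s - 1)),
      mul_nonneg (mul_pos hθ0 h1θ).le (sub_nonneg.mpr hLC)]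
  have hlow : L * (1 - θ / (4 * (1 - θ) * Cstar ^ 2)) ≤ alphaf θ A q := by
    rw [halpha]; nlinarith [key]
  refine ⟨hlow, ?_, ?_⟩
  · rw [halpha]
    nlinarith [mul_nonneg hc (mul_nonneg hs0 (sub_nonneg.mpr hs1))]
  · intro hcond
    have hx : θ / (4 * (1 - θ) * Cstar ^ 2) < 1 := by
      rw [div_lt_one hden]
      have := (div_lt_iff₀ (by linarith : (0:ℝ) < 4 * (1 - θ))).mp hcond
      nlinarith
    have : 0 < L * (1 - θ / (4 * (1 - θ) * Cstar ^ 2)) :=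
      mul_pos hL0 (by linarith)
    linarith

end
end

section
/- Let α > 0 and β ∈ ℝ satisfy 4|β| ≤ α^{3/2}. Then every real root x of the cubic x³ − αx + β = 0 satisfies at least one of: |x| ≤ 2|β|/α, |x − √α| ≤ 2|β|/α, or |x + √α| ≤ 2|β|/α. -/
open Matrix MeasureTheory ProbabilityTheory Real
open scoped BigOperators ENNReal

noncomputable section

theorem stmt8 (α β x : ℝ) (hα : 0 < α) (hβ : 4 * |β| ≤ Real.sqrt α ^ 3)
    (hx : x ^ 3 - α * x + β = 0) :
    |x| ≤ 2*|β|/α ∨ |x - Real.sqrt α| ≤ 2*|β|/α ∨ |x + Real.sqrt α| ≤ 2*|β|/α := by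
  set s := Real.sqrt α with hsdef
  have hs : 0 < s := Real.sqrt_pos.mpr hα
  have hs2 : s ^ 2 = α := Real.sq_sqrt hα.le
  have hfac : x * (x - s) * (x + s) = -β := by linear_combination hx - x * hs2
  have hprod : |x| * |x - s| * |x + s| = |β| := by
    rw [← abs_mul, ← abs_mul, hfac, abs_neg]
  rcases le_total 0 x with hx0 | hx0
  · have hxs : |x + s| = x + s := abs_of_nonneg (by linarith)
    rcases le_total (2 * x) s with h | h
    · left
      have hxa : |x| = x := abs_of_nonneg hx0
      have hxm : |x - s| = s - x := by rw [abs_of_nonpos (by linarith)]; ring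
      rw [hxa, le_div_iff₀ hα, ← hs2]
      rw [hxa, hxm, hxs] at hprod
      nlinarith [hprod,
        mul_nonneg (mul_nonneg hx0 (by linarith : (0:ℝ) ≤ s - 2*x)) (by linarith : (0:ℝ) ≤ s + 2*x),
        mul_nonneg (mul_nonneg hx0 hx0) hx0]
    · right; left
      rw [le_div_iff₀ hα, ← hs2]
      have h1 : s / 2 ≤ |x| := by rw [abs_of_nonneg hx0]; linarith
      have h2 : s ≤ |x + s| := by rw [hxs]; linarith
      have h3 : s/2 * s ≤ |x| * |x + s| := mul_le_mul h1 h2 hs.le (abs_nonneg x)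
      have h4 : |x - s| * (s*s) ≤ |x - s| * (2*(|x| * |x + s|)) :=
        mul_le_mul_of_nonneg_left (by linarith) (abs_nonneg _)
      nlinarith [h4, hprod]
  · have hxm : |x - s| = s - x := by rw [abs_of_nonpos (by linarith)]; ring
    rcases le_total (-s) (2 * x) with h | h
    · left
      have hxa : |x| = -x := abs_of_nonpos hx0
      have hxs : |x + s| = x + s := abs_of_nonneg (by linarith)
      rw [hxa, le_div_iff₀ hα, ← hs2]
      rw [hxa, hxm, hxs] at hprod
      have nx : (0:ℝ) ≤ -x := by linarith
      nlinarith [hprod,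
        mul_nonneg (mul_nonneg nx (by linarith : (0:ℝ) ≤ s + 2*x)) (by linarith : (0:ℝ) ≤ s - 2*x),
        mul_nonneg (mul_nonneg nx nx) nx]
    · right; right
      rw [le_div_iff₀ hα, ← hs2]
      have h1 : s / 2 ≤ |x| := by rw [abs_of_nonpos hx0]; linarith
      have h2 : s ≤ |x - s| := by rw [hxm]; linarith
      have h3 : s/2 * s ≤ |x| * |x - s| := mul_le_mul h1 h2 hs.le (abs_nonneg x)
      have h4 : |x + s| * (s*s) ≤ |x + s| * (2*(|x| * |x - s|)) :=
        mul_le_mul_of_nonneg_left (by linarith) (abs_nonneg _)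
      nlinarith [h4, hprod]

end
end
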